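/- arXiv:1605.02336 — 14 statements merged into one kernel-verified Lean document; each statement's English description precedes it below -/
import Mathlib

section
/- Let n ∈ ℝ and k_n = n − 1. On the phase space Ω = {(r, φ, p_r, p_φ) ∈ ℝ⁴ : r > 0} with canonical Poisson bracket, the three Noether momenta P₁ = rⁿ(p_r cos(k_n φ) + (p_φ/r) sin(k_n φ)), P₂ = rⁿ(p_r sin(k_n φ) − (p_φ/r) cos(k_n φ)) and p_φ all Poisson-commute with the kinetic Hamiltonian T_n = (1/2) r^{2n}(p_r² + p_φ²/r²): {P₁, T_n} = 0, {P₂, T_n} = 0 and {p_φ, T_n} = 0 at every point of Ω. -/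
open Real

/-- Canonical Poisson bracket on the phase space Ω ⊆ ℝ⁴ with coordinates (r, φ, p_r, p_φ):
{F,G} = F_r G_{p_r} − F_{p_r} G_r + F_φ G_{p_φ} − F_{p_φ} G_φ. -/
noncomputable def pb (F G : ℝ → ℝ → ℝ → ℝ → ℝ) (r φ pr pφ : ℝ) : ℝ :=
  (deriv (fun x => F x φ pr pφ) r) * (deriv (fun x => G r φ x pφ) pr)
    - (deriv (fun x => F r φ x pφ) pr) * (deriv (fun x => G x φ pr pφ) r)
    + (deriv (fun x => F r x pr pφ) φ) * (deriv (fun x => G r φ pr x) pφ)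
    - (deriv (fun x => F r φ pr x) pφ) * (deriv (fun x => G r x pr pφ) φ)

/-- Kinetic Hamiltonian T_n = (1/2) r^(2n) (p_r² + p_φ²/r²) of the
position dependent mass m_n = 1/r^(2n). -/
noncomputable def Tkin (n : ℝ) (r φ pr pφ : ℝ) : ℝ :=
  (1/2) * r ^ (2*n) * (pr^2 + pφ^2 / r^2)

/-- Noether momentum P₁ = rⁿ (p_r cos(k_n φ) + (p_φ/r) sin(k_n φ)), k_n = n − 1. -/
noncomputable def P1 (n : ℝ) (r φ pr pφ : ℝ) : ℝ :=
  r ^ n * (pr * cos ((n-1)*φ) + (pφ / r) * sin ((n-1)*φ))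

/-- Noether momentum P₂ = rⁿ (p_r sin(k_n φ) − (p_φ/r) cos(k_n φ)), k_n = n − 1. -/
noncomputable def P2 (n : ℝ) (r φ pr pφ : ℝ) : ℝ :=
  r ^ n * (pr * sin ((n-1)*φ) - (pφ / r) * cos ((n-1)*φ))

section aux

variable (n r φ pr pφ : ℝ)

/-- r-derivative of the kinetic Hamiltonian. -/
lemma dTkin_r (hr : 0 < r) :
    deriv (fun x => Tkin n x φ pr pφ) r
      = n * pr^2 * r^(2*n) / r + (n-1) * pφ^2 * r^(2*n) / r^3 := by
  have h1 : HasDerivAt (fun x : ℝ => x ^ (2*n)) (2*n * r ^ (2*n-1)) r :=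
    Real.hasDerivAt_rpow_const (Or.inl hr.ne')
  have h2 : HasDerivAt (fun x : ℝ => pr^2 + pφ^2 / x^2)
      ((0 * r^2 - pφ^2 * (2 * r ^ 1)) / (r^2)^2) r := by
    have := ((hasDerivAt_const r (pφ^2)).div (hasDerivAt_pow 2 r)
      (pow_ne_zero 2 hr.ne'))
    simpa using this.const_add (pr^2)
  have h : HasDerivAt (fun x => (1/2) * x ^ (2*n) * (pr^2 + pφ^2 / x^2)) _ r :=
    (h1.const_mul (1/2:ℝ)).mul h2
  rw [show (fun x => Tkin n x φ pr pφ) = fun x => (1/2) * x ^ (2*n) * (pr^2 + pφ^2 / x^2)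
    from rfl, h.deriv, Real.rpow_sub hr, Real.rpow_one]
  field_simp
  ring

/-- p_r-derivative of the kinetic Hamiltonian. -/
lemma dTkin_pr :
    deriv (fun x => Tkin n r φ x pφ) pr = r ^ (2*n) * pr := by
  have h2 : HasDerivAt (fun x : ℝ => Tkin n r φ x pφ) ((1/2) * r ^ (2*n) * (2*pr)) pr := by
    have := ((hasDerivAt_pow 2 pr).add_const (pφ^2 / r^2)).const_mul ((1/2) * r ^ (2*n))
    simpa [Tkin, mul_assoc] using this
  rw [h2.deriv]; ring

/-- φ-derivative of the kinetic Hamiltonian. -/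
lemma dTkin_φ :
    deriv (fun x => Tkin n r x pr pφ) φ = 0 := by
  simp [Tkin]

/-- p_φ-derivative of the kinetic Hamiltonian. -/
lemma dTkin_pφ :
    deriv (fun x => Tkin n r φ pr x) pφ = r ^ (2*n) * pφ / r^2 := by
  have h2 : HasDerivAt (fun x : ℝ => Tkin n r φ pr x)
      ((1/2) * r ^ (2*n) * (2*pφ / r^2)) pφ := by
    have := ((((hasDerivAt_pow 2 pφ).div_const (r^2)).const_add (pr^2)).const_mul
      ((1/2) * r ^ (2*n)))
    simpa [Tkin, mul_assoc] using this
  rw [h2.deriv]; ring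

/-- r-derivative of P₁. -/
lemma dP1_r (hr : 0 < r) :
    deriv (fun x => P1 n x φ pr pφ) r
      = n * pr * cos ((n-1)*φ) * r^n / r + (n-1) * pφ * sin ((n-1)*φ) * r^n / r^2 := by
  have h1 : HasDerivAt (fun x : ℝ => x ^ n) (n * r ^ (n-1)) r :=
    Real.hasDerivAt_rpow_const (Or.inl hr.ne')
  have h2 : HasDerivAt (fun x : ℝ => pr * cos ((n-1)*φ) + (pφ / x) * sin ((n-1)*φ))
      (((0 * r - pφ * 1) / r^2) * sin ((n-1)*φ)) r := by
    have := (((hasDerivAt_const r pφ).div (hasDerivAt_id r) hr.ne').mul_const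
      (sin ((n-1)*φ))).const_add (pr * cos ((n-1)*φ))
    simpa using this
  have h : HasDerivAt (fun x => x ^ n * (pr * cos ((n-1)*φ) + (pφ / x) * sin ((n-1)*φ))) _ r :=
    h1.mul h2
  rw [show (fun x => P1 n x φ pr pφ)
      = fun x => x ^ n * (pr * cos ((n-1)*φ) + (pφ / x) * sin ((n-1)*φ)) from rfl,
    h.deriv, Real.rpow_sub hr, Real.rpow_one]
  field_simp
  ring

/-- p_r-derivative of P₁. -/
lemma dP1_pr :
    deriv (fun x => P1 n r φ x pφ) pr = r ^ n * cos ((n-1)*φ) := by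
  have h : HasDerivAt (fun x : ℝ => P1 n r φ x pφ) (r ^ n * (1 * cos ((n-1)*φ))) pr := by
    have := (((hasDerivAt_id pr).mul_const (cos ((n-1)*φ))).add_const
      ((pφ / r) * sin ((n-1)*φ))).const_mul (r ^ n)
    simpa [P1] using this
  rw [h.deriv]; ring

/-- φ-derivative of P₁. -/
lemma dP1_φ :
    deriv (fun x => P1 n r x pr pφ) φ
      = r ^ n * ((n-1) * (- pr * sin ((n-1)*φ) + (pφ / r) * cos ((n-1)*φ))) := by
  have hc : HasDerivAt (fun x : ℝ => cos ((n-1)*x)) (-sin ((n-1)*φ) * (n-1)) φ :=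
    (Real.hasDerivAt_cos ((n-1)*φ)).comp φ (by simpa using (hasDerivAt_id φ).const_mul (n-1))
  have hs : HasDerivAt (fun x : ℝ => sin ((n-1)*x)) (cos ((n-1)*φ) * (n-1)) φ :=
    (Real.hasDerivAt_sin ((n-1)*φ)).comp φ (by simpa using (hasDerivAt_id φ).const_mul (n-1))
  have h : HasDerivAt (fun x : ℝ => P1 n r x pr pφ)
      (r ^ n * (pr * (-sin ((n-1)*φ) * (n-1)) + (pφ / r) * (cos ((n-1)*φ) * (n-1)))) φ := by
    have := ((hc.const_mul pr).add (hs.const_mul (pφ / r))).const_mul (r ^ n)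
    simpa [P1, mul_comm] using this
  rw [h.deriv]; ring

/-- p_φ-derivative of P₁. -/
lemma dP1_pφ :
    deriv (fun x => P1 n r φ pr x) pφ = r ^ n * sin ((n-1)*φ) / r := by
  have h : HasDerivAt (fun x : ℝ => P1 n r φ pr x)
      (r ^ n * ((1 / r) * sin ((n-1)*φ))) pφ := by
    have := ((((hasDerivAt_id pφ).div_const r).mul_const (sin ((n-1)*φ))).const_add
      (pr * cos ((n-1)*φ))).const_mul (r ^ n)
    simpa [P1] using this
  rw [h.deriv]; ring

/-- r-derivative of P₂. -/
lemma dP2_r (hr : 0 < r) :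
    deriv (fun x => P2 n x φ pr pφ) r
      = n * pr * sin ((n-1)*φ) * r^n / r - (n-1) * pφ * cos ((n-1)*φ) * r^n / r^2 := by
  have h1 : HasDerivAt (fun x : ℝ => x ^ n) (n * r ^ (n-1)) r :=
    Real.hasDerivAt_rpow_const (Or.inl hr.ne')
  have h2 : HasDerivAt (fun x : ℝ => pr * sin ((n-1)*φ) - (pφ / x) * cos ((n-1)*φ))
      (0 - ((0 * r - pφ * 1) / r^2) * cos ((n-1)*φ)) r := by
    have := (hasDerivAt_const r (pr * sin ((n-1)*φ))).sub
      (((hasDerivAt_const r pφ).div (hasDerivAt_id r) hr.ne').mul_const (cos ((n-1)*φ)))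
    exact this
  have h : HasDerivAt (fun x => x ^ n * (pr * sin ((n-1)*φ) - (pφ / x) * cos ((n-1)*φ))) _ r :=
    h1.mul h2
  rw [show (fun x => P2 n x φ pr pφ)
      = fun x => x ^ n * (pr * sin ((n-1)*φ) - (pφ / x) * cos ((n-1)*φ)) from rfl,
    h.deriv, Real.rpow_sub hr, Real.rpow_one]
  field_simp
  ring

/-- p_r-derivative of P₂. -/
lemma dP2_pr :
    deriv (fun x => P2 n r φ x pφ) pr = r ^ n * sin ((n-1)*φ) := by
  have h : HasDerivAt (fun x : ℝ => P2 n r φ x pφ) (r ^ n * (1 * sin ((n-1)*φ))) pr := by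
    have := (((hasDerivAt_id pr).mul_const (sin ((n-1)*φ))).sub_const
      ((pφ / r) * cos ((n-1)*φ))).const_mul (r ^ n)
    simpa [P2] using this
  rw [h.deriv]; ring

/-- φ-derivative of P₂. -/
lemma dP2_φ :
    deriv (fun x => P2 n r x pr pφ) φ
      = r ^ n * ((n-1) * (pr * cos ((n-1)*φ) + (pφ / r) * sin ((n-1)*φ))) := by
  have hc : HasDerivAt (fun x : ℝ => cos ((n-1)*x)) (-sin ((n-1)*φ) * (n-1)) φ :=
    (Real.hasDerivAt_cos ((n-1)*φ)).comp φ (by simpa using (hasDerivAt_id φ).const_mul (n-1))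
  have hs : HasDerivAt (fun x : ℝ => sin ((n-1)*x)) (cos ((n-1)*φ) * (n-1)) φ :=
    (Real.hasDerivAt_sin ((n-1)*φ)).comp φ (by simpa using (hasDerivAt_id φ).const_mul (n-1))
  have h : HasDerivAt (fun x : ℝ => P2 n r x pr pφ)
      (r ^ n * (pr * (cos ((n-1)*φ) * (n-1)) - (pφ / r) * (-sin ((n-1)*φ) * (n-1)))) φ := by
    have := ((hs.const_mul pr).sub (hc.const_mul (pφ / r))).const_mul (r ^ n)
    simpa [P2, mul_comm] using this
  rw [h.deriv]; ring

/-- p_φ-derivative of P₂. -/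
lemma dP2_pφ :
    deriv (fun x => P2 n r φ pr x) pφ = - (r ^ n * cos ((n-1)*φ) / r) := by
  have h : HasDerivAt (fun x : ℝ => P2 n r φ pr x)
      (r ^ n * (0 - (1 / r) * cos ((n-1)*φ))) pφ := by
    have := ((hasDerivAt_const pφ (pr * sin ((n-1)*φ))).sub
      (((hasDerivAt_id pφ).div_const r).mul_const (cos ((n-1)*φ)))).const_mul (r ^ n)
    simpa [P2] using this
  rw [h.deriv]; ring

lemma rpow_two_mul (hr : 0 < r) : r ^ (2*n) = r ^ n * r ^ n := by
  rw [two_mul, Real.rpow_add hr]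

end aux

/-- The Noether momenta P₁, P₂ and p_φ Poisson-commute with the kinetic
Hamiltonian T_n on Ω = {r > 0}. -/
theorem noether_momenta_commute_with_Tkin (n : ℝ) :
    ∀ r φ pr pφ : ℝ, 0 < r →
      pb (P1 n) (Tkin n) r φ pr pφ = 0 ∧
      pb (P2 n) (Tkin n) r φ pr pφ = 0 ∧
      pb (fun _ _ _ p => p) (Tkin n) r φ pr pφ = 0 := by
  intro r φ pr pφ hr
  have hrne : r ≠ 0 := hr.ne'
  have hAne : r ^ n ≠ 0 := (Real.rpow_pos_of_pos hr n).ne'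
  refine ⟨?_, ?_, ?_⟩
  · rw [pb, dTkin_r n r φ pr pφ hr, dTkin_pr, dTkin_φ, dTkin_pφ,
      dP1_r n r φ pr pφ hr, dP1_pr, dP1_φ, dP1_pφ, rpow_two_mul n r hr]
    field_simp
    ring
  · rw [pb, dTkin_r n r φ pr pφ hr, dTkin_pr, dTkin_φ, dTkin_pφ,
      dP2_r n r φ pr pφ hr, dP2_pr, dP2_φ, dP2_pφ, rpow_two_mul n r hr]
    field_simp
    ring
  · rw [pb, dTkin_r n r φ pr pφ hr, dTkin_pr, dTkin_φ, dTkin_pφ]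
    simp
end

section
/- Let n ∈ ℝ, n ≠ 1, k_n = n − 1, k₀ ∈ ℝ, and consider the Hamiltonian H_na = T_n + k₀/r^{2k_n} on Ω = {r > 0}. Then the three functions J₁ = p_φ, J₁₁ = P₁² + 2(k₀/r^{2k_n}) cos²(k_n φ) and J₂₂ = P₂² + 2(k₀/r^{2k_n}) sin²(k_n φ) are constants of motion: {J₁, H_na} = 0, {J₁₁, H_na} = 0 and {J₂₂, H_na} = 0 at every point of Ω. -/
open Real

/-- The Hamiltonian H_na = T_n + k₀/r^(2 k_n), k_n = n − 1. -/
noncomputable def Hna (n k0 : ℝ) (r φ pr pφ : ℝ) : ℝ :=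
  Tkin n r φ pr pφ + k0 / r ^ (2*(n-1))

lemma hHr (n k0 r φ pr pφ : ℝ) (hr : 0 < r) :
    HasDerivAt (fun x => Hna n k0 x φ pr pφ)
      (n * r^(2*n-1) * (pr^2 + pφ^2/r^2) - r^(2*n)*pφ^2/r^3
        - 2*(n-1)*k0*r^(2*(n-1)-1)/(r^(2*(n-1)))^2) r := by
  have hne : r ^ (2*(n-1)) ≠ 0 := (Real.rpow_pos_of_pos hr _).ne'
  have h0 := (((Real.hasDerivAt_rpow_const (x:=r) (p:=2*n) (Or.inl hr.ne')).const_mul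
      ((1:ℝ)/2)).mul ((hasDerivAt_const r (pr^2)).add
      ((hasDerivAt_const r (pφ^2)).div (hasDerivAt_pow 2 r) (by positivity)))).add
      ((hasDerivAt_const r k0).div
      (Real.hasDerivAt_rpow_const (x:=r) (p:=2*(n-1)) (Or.inl hr.ne')) hne)
  refine h0.congr_deriv ?_
  have hr2 : r^(2*n-1) = r^(2*n)/r := by rw [Real.rpow_sub hr, Real.rpow_one]
  have hr3 : r^(2*(n-1)-1) = r^(2*(n-1))/r := by rw [Real.rpow_sub hr, Real.rpow_one]
  rw [hr2, hr3]; simp only [Pi.add_apply, Pi.div_apply]; push_cast; field_simp; ring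

lemma hHpr (n k0 r φ pr pφ : ℝ) :
    HasDerivAt (fun x => Hna n k0 r φ x pφ) (r^(2*n) * pr) pr := by
  have h0 := ((((hasDerivAt_pow 2 pr).add_const (pφ^2/r^2)).const_mul
      ((1:ℝ)/2 * r^(2*n))).add_const (k0/r^(2*(n-1))))
  refine h0.congr_deriv ?_; push_cast; ring

lemma hHpφ (n k0 r φ pr pφ : ℝ) :
    HasDerivAt (fun x => Hna n k0 r φ pr x) (r^(2*n) * pφ / r^2) pφ := by
  have h0 := (((((hasDerivAt_pow 2 pφ).div_const (r^2)).const_add (pr^2)).const_mul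
      ((1:ℝ)/2 * r^(2*n))).add_const (k0/r^(2*(n-1))))
  refine h0.congr_deriv ?_; push_cast; ring

lemma hHφ (n k0 r φ pr pφ : ℝ) :
    deriv (fun x => Hna n k0 r x pr pφ) φ = 0 := by
  simp [Hna, Tkin]

lemma hJ11pr (n k0 r φ pr pφ : ℝ) :
    HasDerivAt (fun x => (P1 n r φ x pφ)^2 + 2*(k0/r^(2*(n-1)))*(cos ((n-1)*φ))^2)
      (2 * P1 n r φ pr pφ * (r^n * cos ((n-1)*φ))) pr := by
  have h0 := (((((hasDerivAt_mul_const (cos ((n-1)*φ))).add_const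
      ((pφ/r) * sin ((n-1)*φ))).const_mul (r^n)).pow 2 (x := pr)).add_const
      (2*(k0/r^(2*(n-1)))*(cos ((n-1)*φ))^2))
  refine h0.congr_deriv ?_; push_cast; unfold P1; ring

lemma hJ11pφ (n k0 r φ pr pφ : ℝ) :
    HasDerivAt (fun x => (P1 n r φ pr x)^2 + 2*(k0/r^(2*(n-1)))*(cos ((n-1)*φ))^2)
      (2 * P1 n r φ pr pφ * (r^n * sin ((n-1)*φ) / r)) pφ := by
  have h0 := ((((((hasDerivAt_id pφ).div_const r).mul_const (sin ((n-1)*φ))).const_add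
      (pr * cos ((n-1)*φ))).const_mul (r^n)).pow 2 (x := pφ)).add_const
      (2*(k0/r^(2*(n-1)))*(cos ((n-1)*φ))^2)
  refine h0.congr_deriv ?_; push_cast; unfold P1; simp only [id_eq]; ring

lemma hJ11φ (n k0 r φ pr pφ : ℝ) :
    HasDerivAt (fun y => (P1 n r y pr pφ)^2 + 2*(k0/r^(2*(n-1)))*(cos ((n-1)*y))^2)
      ((n-1) * (2 * P1 n r φ pr pφ * (r^n*(pφ/r*cos ((n-1)*φ) - pr*sin ((n-1)*φ)))
        - 4*(k0/r^(2*(n-1)))*cos ((n-1)*φ)*sin ((n-1)*φ))) φ := by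
  have hcos := (((hasDerivAt_id φ).const_mul (n-1)).cos)
  have hsin := (((hasDerivAt_id φ).const_mul (n-1)).sin)
  have h0 := ((((hcos.const_mul pr).add (hsin.const_mul (pφ/r))).const_mul (r^n)).pow 2).add
      ((hcos.pow 2).const_mul (2*(k0/r^(2*(n-1)))))
  refine h0.congr_deriv ?_
  push_cast; unfold P1; simp only [id_eq, Pi.add_apply, Pi.sub_apply, Pi.mul_apply, Pi.div_apply, Pi.pow_apply]; ring

lemma hJ11r (n k0 r φ pr pφ : ℝ) (hr : 0 < r) :
    HasDerivAt (fun x => (P1 n x φ pr pφ)^2 + 2*(k0/x^(2*(n-1)))*(cos ((n-1)*φ))^2)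
      (2 * P1 n r φ pr pφ * (n*r^(n-1)*(pr*cos ((n-1)*φ) + pφ/r*sin ((n-1)*φ))
          - r^n*pφ*sin ((n-1)*φ)/r^2)
        - 4*(n-1)*k0*r^(2*(n-1)-1)*(cos ((n-1)*φ))^2/(r^(2*(n-1)))^2) r := by
  have hne : r ^ (2*(n-1)) ≠ 0 := (Real.rpow_pos_of_pos hr _).ne'
  have hdivφ := (hasDerivAt_const r pφ).div (hasDerivAt_id r) hr.ne'
  have h1 := ((Real.hasDerivAt_rpow_const (x:=r) (p:=n) (Or.inl hr.ne')).mul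
      ((hdivφ.mul_const (sin ((n-1)*φ))).const_add (pr * cos ((n-1)*φ)))).pow 2
  have hk := (hasDerivAt_const r k0).div
      (Real.hasDerivAt_rpow_const (x:=r) (p:=2*(n-1)) (Or.inl hr.ne')) hne
  have h0 := h1.add ((hk.const_mul 2).mul_const ((cos ((n-1)*φ))^2))
  refine h0.congr_deriv ?_
  push_cast; unfold P1; simp only [id_eq, Pi.add_apply, Pi.sub_apply, Pi.mul_apply, Pi.div_apply, Pi.pow_apply]
  field_simp
  ring

lemma hJ22pr (n k0 r φ pr pφ : ℝ) :
    HasDerivAt (fun x => (P2 n r φ x pφ)^2 + 2*(k0/r^(2*(n-1)))*(sin ((n-1)*φ))^2)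
      (2 * P2 n r φ pr pφ * (r^n * sin ((n-1)*φ))) pr := by
  have h0 := (((((hasDerivAt_mul_const (sin ((n-1)*φ))).sub_const
      ((pφ/r) * cos ((n-1)*φ))).const_mul (r^n)).pow 2 (x := pr)).add_const
      (2*(k0/r^(2*(n-1)))*(sin ((n-1)*φ))^2))
  refine h0.congr_deriv ?_; push_cast; unfold P2; ring

lemma hJ22pφ (n k0 r φ pr pφ : ℝ) :
    HasDerivAt (fun x => (P2 n r φ pr x)^2 + 2*(k0/r^(2*(n-1)))*(sin ((n-1)*φ))^2)
      (-(2 * P2 n r φ pr pφ * (r^n * cos ((n-1)*φ) / r))) pφ := by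
  have h0 := (((HasDerivAt.const_sub (pr * sin ((n-1)*φ))
      (((hasDerivAt_id pφ).div_const r).mul_const (cos ((n-1)*φ)))).const_mul
      (r^n)).pow 2 (x := pφ)).add_const (2*(k0/r^(2*(n-1)))*(sin ((n-1)*φ))^2)
  refine h0.congr_deriv ?_; push_cast; unfold P2; simp only [id_eq]; ring

lemma hJ22φ (n k0 r φ pr pφ : ℝ) :
    HasDerivAt (fun y => (P2 n r y pr pφ)^2 + 2*(k0/r^(2*(n-1)))*(sin ((n-1)*y))^2)
      ((n-1) * (2 * P2 n r φ pr pφ * (r^n*(pr*cos ((n-1)*φ) + pφ/r*sin ((n-1)*φ)))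
        + 4*(k0/r^(2*(n-1)))*cos ((n-1)*φ)*sin ((n-1)*φ))) φ := by
  have hcos := (((hasDerivAt_id φ).const_mul (n-1)).cos)
  have hsin := (((hasDerivAt_id φ).const_mul (n-1)).sin)
  have h0 := ((((hsin.const_mul pr).sub (hcos.const_mul (pφ/r))).const_mul (r^n)).pow 2).add
      ((hsin.pow 2).const_mul (2*(k0/r^(2*(n-1)))))
  refine h0.congr_deriv ?_
  push_cast; unfold P2; simp only [id_eq, Pi.add_apply, Pi.sub_apply, Pi.mul_apply, Pi.div_apply, Pi.pow_apply]; ring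

lemma hJ22r (n k0 r φ pr pφ : ℝ) (hr : 0 < r) :
    HasDerivAt (fun x => (P2 n x φ pr pφ)^2 + 2*(k0/x^(2*(n-1)))*(sin ((n-1)*φ))^2)
      (2 * P2 n r φ pr pφ * (n*r^(n-1)*(pr*sin ((n-1)*φ) - pφ/r*cos ((n-1)*φ))
          + r^n*pφ*cos ((n-1)*φ)/r^2)
        - 4*(n-1)*k0*r^(2*(n-1)-1)*(sin ((n-1)*φ))^2/(r^(2*(n-1)))^2) r := by
  have hne : r ^ (2*(n-1)) ≠ 0 := (Real.rpow_pos_of_pos hr _).ne'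
  have hdivφ := (hasDerivAt_const r pφ).div (hasDerivAt_id r) hr.ne'
  have h1 := ((Real.hasDerivAt_rpow_const (x:=r) (p:=n) (Or.inl hr.ne')).mul
      (HasDerivAt.const_sub (pr * sin ((n-1)*φ)) (hdivφ.mul_const (cos ((n-1)*φ))))).pow 2
  have hk := (hasDerivAt_const r k0).div
      (Real.hasDerivAt_rpow_const (x:=r) (p:=2*(n-1)) (Or.inl hr.ne')) hne
  have h0 := h1.add ((hk.const_mul 2).mul_const ((sin ((n-1)*φ))^2))
  refine h0.congr_deriv ?_
  push_cast; unfold P2; simp only [id_eq, Pi.add_apply, Pi.sub_apply, Pi.mul_apply, Pi.div_apply, Pi.pow_apply]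
  field_simp
  ring

/-- J₁ = p_φ, J₁₁ = P₁² + 2(k₀/r^(2k_n)) cos²(k_n φ) and
J₂₂ = P₂² + 2(k₀/r^(2k_n)) sin²(k_n φ) are constants of motion of H_na on Ω = {r > 0}. -/
theorem Hna_superintegrable (n k0 : ℝ) (hn : n ≠ 1) :
    ∀ r φ pr pφ : ℝ, 0 < r →
      pb (fun _ _ _ p => p) (Hna n k0) r φ pr pφ = 0 ∧
      pb (fun r φ pr pφ => (P1 n r φ pr pφ)^2
            + 2 * (k0 / r ^ (2*(n-1))) * (cos ((n-1)*φ))^2) (Hna n k0) r φ pr pφ = 0 ∧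
      pb (fun r φ pr pφ => (P2 n r φ pr pφ)^2
            + 2 * (k0 / r ^ (2*(n-1))) * (sin ((n-1)*φ))^2) (Hna n k0) r φ pr pφ = 0 := by
  intro r φ pr pφ hr
  have hrne : r ≠ 0 := hr.ne'
  have hu : r ^ n ≠ 0 := (Real.rpow_pos_of_pos hr _).ne'
  have e1 : r^(2*n) = (r^n)^2 := by
    rw [show (2:ℝ)*n = n*2 by ring, Real.rpow_mul hr.le,
      show ((2:ℝ)) = ((2:ℕ):ℝ) by norm_num, Real.rpow_natCast]
  have e2 : r^(2*n-1) = (r^n)^2/r := by rw [Real.rpow_sub hr, Real.rpow_one, e1]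
  have e4 : r^(2*(n-1)-1) = (r^n)^2/r^3 := by
    rw [Real.rpow_sub hr, Real.rpow_one, show (2:ℝ)*(n-1) = 2*n - 2 by ring,
      Real.rpow_sub hr, e1, show ((2:ℝ)) = ((2:ℕ):ℝ) by norm_num, Real.rpow_natCast]
    field_simp
  have e3 : r^(2*(n-1)) = (r^n)^2/r^2 := by
    rw [show (2:ℝ)*(n-1) = 2*n - 2 by ring, Real.rpow_sub hr, e1,
      show ((2:ℝ)) = ((2:ℕ):ℝ) by norm_num, Real.rpow_natCast]
  have e5 : r^(n-1) = r^n/r := by rw [Real.rpow_sub hr, Real.rpow_one]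
  refine ⟨?_, ?_, ?_⟩
  · simp [pb, hHφ]
  · simp only [pb]
    rw [(hJ11r n k0 r φ pr pφ hr).deriv, (hJ11pr n k0 r φ pr pφ).deriv,
      (hJ11pφ n k0 r φ pr pφ).deriv, (hJ11φ n k0 r φ pr pφ).deriv,
      (hHr n k0 r φ pr pφ hr).deriv, (hHpr n k0 r φ pr pφ).deriv,
      (hHpφ n k0 r φ pr pφ).deriv, hHφ]
    simp only [P1]
    rw [e2, e4, e1, e3, e5]
    field_simp
    ring
  · simp only [pb]
    rw [(hJ22r n k0 r φ pr pφ hr).deriv, (hJ22pr n k0 r φ pr pφ).deriv,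
      (hJ22pφ n k0 r φ pr pφ).deriv, (hJ22φ n k0 r φ pr pφ).deriv,
      (hHr n k0 r φ pr pφ hr).deriv, (hHpr n k0 r φ pr pφ).deriv,
      (hHpφ n k0 r φ pr pφ).deriv, hHφ]
    simp only [P2]
    rw [e2, e4, e1, e3, e5]
    field_simp
    ring
end

section
/- Let n ∈ ℝ, k_n = n − 1, k₀ ∈ ℝ. On Ω = {r > 0}, the two quadratic integrals J₁₁ = P₁² + 2(k₀/r^{2k_n}) cos²(k_n φ) and J₂₂ = P₂² + 2(k₀/r^{2k_n}) sin²(k_n φ) of the Hamiltonian H_na = T_n + k₀/r^{2k_n} are in involution: {J₁₁, J₂₂} = 0 at every point of Ω. -/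
open Real

/-- The quadratic integrals J₁₁ and J₂₂ of H_na = T_n + k₀/r^(2k_n) are in involution
on Ω = {r > 0}. -/
theorem J11_J22_in_involution (n k0 : ℝ) :
    ∀ r φ pr pφ : ℝ, 0 < r →
      pb (fun r φ pr pφ => (P1 n r φ pr pφ)^2
            + 2 * (k0 / r ^ (2*(n-1))) * (cos ((n-1)*φ))^2)
         (fun r φ pr pφ => (P2 n r φ pr pφ)^2
            + 2 * (k0 / r ^ (2*(n-1))) * (sin ((n-1)*φ))^2) r φ pr pφ = 0 := by
  intro r φ pr pφ hr
  have hr0 : r ≠ 0 := ne_of_gt hr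
  have hE : (0:ℝ) < r ^ (n-1) := Real.rpow_pos_of_pos hr _
  have hP : (0:ℝ) < r ^ (2*(n-1)) := Real.rpow_pos_of_pos hr _
  -- basic HasDerivAt facts
  have hpn : HasDerivAt (fun x : ℝ => x ^ n) (n * r ^ (n-1)) r := by
    simpa using Real.hasDerivAt_rpow_const (p := n) (Or.inl hr0)
  have hp2 : HasDerivAt (fun x : ℝ => x ^ (2*(n-1))) ((2*(n-1)) * r ^ (2*(n-1)-1)) r := by
    simpa using Real.hasDerivAt_rpow_const (p := 2*(n-1)) (Or.inl hr0)
  have hq : HasDerivAt (fun x : ℝ => pφ / x) ((0 * r - pφ * 1) / r ^ 2) r :=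
    (hasDerivAt_const r pφ).div (hasDerivAt_id r) hr0
  have hmul : HasDerivAt (fun x : ℝ => (n-1)*x) (n-1) φ := by
    simpa using (hasDerivAt_id φ).const_mul (n-1)
  have hc : HasDerivAt (fun x : ℝ => Real.cos ((n-1)*x)) (-Real.sin ((n-1)*φ) * (n-1)) φ :=
    hmul.cos
  have hs : HasDerivAt (fun x : ℝ => Real.sin ((n-1)*x)) (Real.cos ((n-1)*φ) * (n-1)) φ :=
    hmul.sin
  set c := Real.cos ((n-1)*φ) with hcdef
  set s := Real.sin ((n-1)*φ) with hsdef
  -- r-derivatives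
  have hdivk : HasDerivAt (fun x : ℝ => k0 / x ^ (2*(n-1)))
      ((0 * r ^ (2*(n-1)) - k0 * ((2*(n-1)) * r ^ (2*(n-1)-1))) / (r ^ (2*(n-1))) ^ 2) r :=
    (hasDerivAt_const r k0).div hp2 (ne_of_gt hP)
  have h1r : HasDerivAt
      (fun x : ℝ => (x ^ n * (pr * c + pφ / x * s))^2 + 2 * (k0 / x ^ (2*(n-1))) * c^2)
      (2 * (r ^ n * (pr * c + pφ / r * s)) ^ 1 *
          (n * r ^ (n-1) * (pr * c + pφ / r * s) + r ^ n * ((0 * r - pφ * 1) / r ^ 2 * s))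
        + (2 * ((0 * r ^ (2*(n-1)) - k0 * ((2*(n-1)) * r ^ (2*(n-1)-1))) / (r ^ (2*(n-1))) ^ 2)) * c^2) r := by
    exact ((hpn.mul ((hq.mul_const s).const_add (pr * c))).pow 2).add
      ((hdivk.const_mul 2).mul_const (c^2))
  have h2r : HasDerivAt
      (fun x : ℝ => (x ^ n * (pr * s - pφ / x * c))^2 + 2 * (k0 / x ^ (2*(n-1))) * s^2)
      (2 * (r ^ n * (pr * s - pφ / r * c)) ^ 1 *
          (n * r ^ (n-1) * (pr * s - pφ / r * c) + r ^ n * (-((0 * r - pφ * 1) / r ^ 2 * c)))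
        + (2 * ((0 * r ^ (2*(n-1)) - k0 * ((2*(n-1)) * r ^ (2*(n-1)-1))) / (r ^ (2*(n-1))) ^ 2)) * s^2) r := by
    exact ((hpn.mul ((hq.mul_const c).const_sub (pr * s))).pow 2).add
      ((hdivk.const_mul 2).mul_const (s^2))
  -- pr-derivatives
  have h1pr : HasDerivAt
      (fun x : ℝ => (r ^ n * (x * c + pφ / r * s))^2 + 2 * (k0 / r ^ (2*(n-1))) * c^2)
      (2 * (r ^ n * (pr * c + pφ / r * s)) ^ 1 * (r ^ n * (1 * c))) pr := by
    exact (((((hasDerivAt_id pr).mul_const c).add_const (pφ / r * s)).const_mul (r ^ n)).pow 2).add_const _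
  have h2pr : HasDerivAt
      (fun x : ℝ => (r ^ n * (x * s - pφ / r * c))^2 + 2 * (k0 / r ^ (2*(n-1))) * s^2)
      (2 * (r ^ n * (pr * s - pφ / r * c)) ^ 1 * (r ^ n * (1 * s))) pr := by
    exact (((((hasDerivAt_id pr).mul_const s).sub_const (pφ / r * c)).const_mul (r ^ n)).pow 2).add_const _
  -- pφ-derivatives
  have h1pp : HasDerivAt
      (fun x : ℝ => (r ^ n * (pr * c + x / r * s))^2 + 2 * (k0 / r ^ (2*(n-1))) * c^2)
      (2 * (r ^ n * (pr * c + pφ / r * s)) ^ 1 * (r ^ n * (1 / r * s))) pφ := by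
    exact ((((((hasDerivAt_id pφ).div_const r).mul_const s).const_add (pr * c)).const_mul (r ^ n)).pow 2).add_const _
  have h2pp : HasDerivAt
      (fun x : ℝ => (r ^ n * (pr * s - x / r * c))^2 + 2 * (k0 / r ^ (2*(n-1))) * s^2)
      (2 * (r ^ n * (pr * s - pφ / r * c)) ^ 1 * (r ^ n * (-(1 / r * c)))) pφ := by
    exact ((((((hasDerivAt_id pφ).div_const r).mul_const c).const_sub (pr * s)).const_mul (r ^ n)).pow 2).add_const _
  -- φ-derivatives
  have h1f : HasDerivAt
      (fun x : ℝ => (r ^ n * (pr * Real.cos ((n-1)*x) + pφ / r * Real.sin ((n-1)*x)))^2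
          + 2 * (k0 / r ^ (2*(n-1))) * (Real.cos ((n-1)*x))^2)
      (2 * (r ^ n * (pr * c + pφ / r * s)) ^ 1 *
          (r ^ n * (pr * (-s * (n-1)) + pφ / r * (c * (n-1))))
        + 2 * (k0 / r ^ (2*(n-1))) * (2 * c ^ 1 * (-s * (n-1)))) φ := by
    exact ((((hc.const_mul pr).add (hs.const_mul (pφ / r))).const_mul (r ^ n)).pow 2).add
      ((hc.pow 2).const_mul (2 * (k0 / r ^ (2*(n-1)))))
  have h2f : HasDerivAt
      (fun x : ℝ => (r ^ n * (pr * Real.sin ((n-1)*x) - pφ / r * Real.cos ((n-1)*x)))^2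
          + 2 * (k0 / r ^ (2*(n-1))) * (Real.sin ((n-1)*x))^2)
      (2 * (r ^ n * (pr * s - pφ / r * c)) ^ 1 *
          (r ^ n * (pr * (c * (n-1)) - pφ / r * (-s * (n-1))))
        + 2 * (k0 / r ^ (2*(n-1))) * (2 * s ^ 1 * (c * (n-1)))) φ := by
    exact ((((hs.const_mul pr).sub (hc.const_mul (pφ / r))).const_mul (r ^ n)).pow 2).add
      ((hs.pow 2).const_mul (2 * (k0 / r ^ (2*(n-1)))))
  simp only [pb, P1, P2, ← hcdef, ← hsdef]
  rw [h1r.deriv, h2r.deriv, h1pr.deriv, h2pr.deriv, h1pp.deriv, h2pp.deriv, h1f.deriv, h2f.deriv]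
  -- power relations
  have hn : r ^ n = r ^ (n-1) * r := by
    rw [← Real.rpow_add_one hr0]; ring_nf
  have h2n : r ^ (2*(n-1)) = (r ^ (n-1)) ^ 2 := by
    rw [show (2:ℝ)*(n-1) = (n-1)*2 by ring, Real.rpow_mul hr.le, Real.rpow_two]
  have h2n1 : r ^ (2*(n-1)-1) = (r ^ (n-1)) ^ 2 / r := by
    rw [Real.rpow_sub hr, h2n, Real.rpow_one]
  rw [hn, h2n, h2n1]
  have hE0 : r ^ (n-1) ≠ 0 := ne_of_gt hE
  field_simp
  ring
end

section
/- Let n ∈ ℝ, k_n = n − 1, k₀ ∈ ℝ. On Ω = {r > 0}, the function J₁₂ = P₁ P₂ + 2(k₀/r^{2k_n}) cos(k_n φ) sin(k_n φ) is a constant of motion of the Hamiltonian H_na = T_n + k₀/r^{2k_n}: {J₁₂, H_na} = 0 at every point of Ω. (Together with J₁₁ and J₂₂ it forms the components of a Fradkin tensor, so H_na represents a harmonic oscillator with position dependent mass m_n = 1/r^{2n}.) -/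
open Real

/-- The Fradkin-tensor component J₁₂ = P₁P₂ + 2(k₀/r^(2k_n)) cos(k_n φ) sin(k_n φ)
is a constant of motion of H_na on Ω = {r > 0}. -/
theorem J12_constant_of_motion (n k0 : ℝ) :
    ∀ r φ pr pφ : ℝ, 0 < r →
      pb (fun r φ pr pφ => P1 n r φ pr pφ * P2 n r φ pr pφ
            + 2 * (k0 / r ^ (2*(n-1))) * cos ((n-1)*φ) * sin ((n-1)*φ))
         (Hna n k0) r φ pr pφ = 0 := by
  intro r φ pr pφ hr
  have hrne : r ≠ 0 := hr.ne'
  have hr2k : (r : ℝ) ^ (2*(n-1)) ≠ 0 := (Real.rpow_pos_of_pos hr _).ne'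
  have hr2 : (r:ℝ)^2 ≠ 0 := pow_ne_zero 2 hrne
  set c := cos ((n-1)*φ) with hc
  set s := sin ((n-1)*φ) with hs
  -- derivatives wrt r
  have hrn : HasDerivAt (fun x : ℝ => x ^ n) (n * r ^ (n-1)) r :=
    Real.hasDerivAt_rpow_const (Or.inl hrne)
  have hr2n : HasDerivAt (fun x : ℝ => x ^ (2*n)) ((2*n) * r ^ (2*n-1)) r :=
    Real.hasDerivAt_rpow_const (Or.inl hrne)
  have hr2kd : HasDerivAt (fun x : ℝ => x ^ (2*(n-1))) ((2*(n-1)) * r ^ (2*(n-1)-1)) r :=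
    Real.hasDerivAt_rpow_const (Or.inl hrne)
  have hdiv : HasDerivAt (fun x : ℝ => pφ / x) ((0 * r - pφ * 1) / r ^ 2) r :=
    (hasDerivAt_const r pφ).div (hasDerivAt_id r) hrne
  have hP1r : HasDerivAt (fun x : ℝ => x ^ n * (pr * c + pφ / x * s))
      (n * r ^ (n-1) * (pr * c + pφ / r * s) + r ^ n * ((0 * r - pφ * 1) / r ^ 2 * s)) r :=
    hrn.mul ((hdiv.mul_const s).const_add (pr * c))
  have hP2r : HasDerivAt (fun x : ℝ => x ^ n * (pr * s - pφ / x * c))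
      (n * r ^ (n-1) * (pr * s - pφ / r * c) + r ^ n * (-((0 * r - pφ * 1) / r ^ 2 * c))) r :=
    hrn.mul ((hdiv.mul_const c).const_sub (pr * s))
  have hk0r : HasDerivAt (fun x : ℝ => k0 / x ^ (2*(n-1)))
      ((0 * r ^ (2*(n-1)) - k0 * ((2*(n-1)) * r ^ (2*(n-1)-1))) / (r ^ (2*(n-1))) ^ 2) r :=
    (hasDerivAt_const r k0).div hr2kd hr2k
  have hFr : HasDerivAt (fun x : ℝ =>
      (x ^ n * (pr * c + pφ / x * s)) * (x ^ n * (pr * s - pφ / x * c))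
        + 2 * (k0 / x ^ (2*(n-1))) * c * s)
      ((n * r ^ (n-1) * (pr * c + pφ / r * s) + r ^ n * ((0 * r - pφ * 1) / r ^ 2 * s))
          * (r ^ n * (pr * s - pφ / r * c))
        + (r ^ n * (pr * c + pφ / r * s))
          * (n * r ^ (n-1) * (pr * s - pφ / r * c) + r ^ n * (-((0 * r - pφ * 1) / r ^ 2 * c)))
        + 2 * ((0 * r ^ (2*(n-1)) - k0 * ((2*(n-1)) * r ^ (2*(n-1)-1))) / (r ^ (2*(n-1))) ^ 2)
            * c * s) r := by
    exact (hP1r.mul hP2r).add (((hk0r.const_mul 2).mul_const c).mul_const s)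
  -- derivative wrt pr
  have hFpr : HasDerivAt (fun x : ℝ =>
      (r ^ n * (x * c + pφ / r * s)) * (r ^ n * (x * s - pφ / r * c))
        + 2 * (k0 / r ^ (2*(n-1))) * c * s)
      ((r ^ n * (1 * c)) * (r ^ n * (pr * s - pφ / r * c))
        + (r ^ n * (pr * c + pφ / r * s)) * (r ^ n * (1 * s))) pr := by
    have h1 := ((((hasDerivAt_id pr).mul_const c).add_const (pφ / r * s)).const_mul (r ^ n))
    have h2 := ((((hasDerivAt_id pr).mul_const s).sub_const (pφ / r * c)).const_mul (r ^ n))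
    exact (h1.mul h2).add_const _
  -- derivative wrt pφ
  have hFpφ : HasDerivAt (fun x : ℝ =>
      (r ^ n * (pr * c + x / r * s)) * (r ^ n * (pr * s - x / r * c))
        + 2 * (k0 / r ^ (2*(n-1))) * c * s)
      ((r ^ n * (1 / r * s)) * (r ^ n * (pr * s - pφ / r * c))
        + (r ^ n * (pr * c + pφ / r * s)) * (r ^ n * (-(1 / r * c)))) pφ := by
    have h1 := ((((hasDerivAt_id pφ).div_const r).mul_const s).const_add (pr * c)).const_mul (r ^ n)
    have h2 := ((((hasDerivAt_id pφ).div_const r).mul_const c).const_sub (pr * s)).const_mul (r ^ n)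
    exact (h1.mul h2).add_const _
  -- derivative wrt φ
  have hcφ : HasDerivAt (fun x : ℝ => cos ((n-1)*x)) (-s * ((n-1) * 1)) φ := by
    simpa [hs] using ((hasDerivAt_id φ).const_mul (n-1)).cos
  have hsφ : HasDerivAt (fun x : ℝ => sin ((n-1)*x)) (c * ((n-1) * 1)) φ := by
    simpa [hc] using ((hasDerivAt_id φ).const_mul (n-1)).sin
  have hFφ : HasDerivAt (fun x : ℝ =>
      (r ^ n * (pr * cos ((n-1)*x) + pφ / r * sin ((n-1)*x)))
        * (r ^ n * (pr * sin ((n-1)*x) - pφ / r * cos ((n-1)*x)))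
        + 2 * (k0 / r ^ (2*(n-1))) * cos ((n-1)*x) * sin ((n-1)*x))
      ((r ^ n * (pr * (-s * ((n-1) * 1)) + pφ / r * (c * ((n-1) * 1))))
          * (r ^ n * (pr * s - pφ / r * c))
        + (r ^ n * (pr * c + pφ / r * s))
          * (r ^ n * (pr * (c * ((n-1) * 1)) - pφ / r * (-s * ((n-1) * 1))))
        + ((2 * (k0 / r ^ (2*(n-1))) * (-s * ((n-1) * 1))) * s
          + (2 * (k0 / r ^ (2*(n-1))) * c) * (c * ((n-1) * 1)))) φ := by
    exact ((((hcφ.const_mul pr).add (hsφ.const_mul (pφ / r))).const_mul (r ^ n)).mul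
        (((hsφ.const_mul pr).sub (hcφ.const_mul (pφ / r))).const_mul (r ^ n))).add
      (((hcφ.const_mul (2 * (k0 / r ^ (2*(n-1))))).mul hsφ))
  -- derivatives of H
  have hGpr : HasDerivAt (fun x : ℝ =>
      1/2 * r ^ (2*n) * (x^2 + pφ^2 / r^2) + k0 / r ^ (2*(n-1)))
      (1/2 * r ^ (2*n) * ((2:ℕ) * pr ^ 1)) pr := by
    exact (((hasDerivAt_pow 2 pr).add_const (pφ^2 / r^2)).const_mul (1/2 * r ^ (2*n))).add_const _
  have hGpφ : HasDerivAt (fun x : ℝ =>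
      1/2 * r ^ (2*n) * (pr^2 + x^2 / r^2) + k0 / r ^ (2*(n-1)))
      (1/2 * r ^ (2*n) * ((2:ℕ) * pφ ^ 1 / r^2)) pφ := by
    exact ((((hasDerivAt_pow 2 pφ).div_const (r^2)).const_add (pr^2)).const_mul
      (1/2 * r ^ (2*n))).add_const _
  have hGr : HasDerivAt (fun x : ℝ =>
      1/2 * x ^ (2*n) * (pr^2 + pφ^2 / x^2) + k0 / x ^ (2*(n-1)))
      ((2*n) * r ^ (2*n-1) * (1/2) * (pr^2 + pφ^2 / r^2)
        + 1/2 * r ^ (2*n) * ((0 * r^2 - pφ^2 * ((2:ℕ) * r ^ 1)) / (r^2)^2)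
        + (0 * r ^ (2*(n-1)) - k0 * ((2*(n-1)) * r ^ (2*(n-1)-1))) / (r ^ (2*(n-1))) ^ 2) r := by
    have h1 : HasDerivAt (fun x : ℝ => 1/2 * x ^ (2*n)) (1/2 * ((2*n) * r ^ (2*n-1))) r :=
      hr2n.const_mul (1/2)
    have h2 : HasDerivAt (fun x : ℝ => pr^2 + pφ^2 / x^2)
        ((0 * r^2 - pφ^2 * ((2:ℕ) * r ^ 1)) / (r^2)^2) r :=
      (((hasDerivAt_const r (pφ^2)).div (hasDerivAt_pow 2 r) hr2).const_add (pr^2))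
    have := (h1.mul h2).add ((hasDerivAt_const r k0).div hr2kd hr2k)
    exact this.congr_deriv (by ring)
  have hGφ : deriv (fun _ : ℝ =>
      1/2 * r ^ (2*n) * (pr^2 + pφ^2 / r^2) + k0 / r ^ (2*(n-1))) φ = 0 := deriv_const _ _
  -- assemble
  simp only [pb, P1, P2, Hna, Tkin]
  rw [hFr.deriv, hFpr.deriv, hFpφ.deriv, hFφ.deriv, hGpr.deriv, hGpφ.deriv, hGr.deriv, hGφ]
  -- rpow identities
  have e1 : r ^ (n-1) = r ^ n / r := by rw [Real.rpow_sub hr, Real.rpow_one]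
  have e2 : r ^ (2*n) = r ^ n * r ^ n := by rw [two_mul, Real.rpow_add hr]
  have e3 : r ^ (2*n-1) = r ^ n * r ^ n / r := by
    rw [Real.rpow_sub hr, Real.rpow_one, two_mul, Real.rpow_add hr]
  have e4 : r ^ (2*(n-1)) = r ^ n * r ^ n / (r * r) := by
    rw [show 2*(n-1) = n + n - (1+1) by ring, Real.rpow_sub hr, Real.rpow_add hr,
      Real.rpow_add hr, Real.rpow_one]
  have e5 : r ^ (2*(n-1)-1) = r ^ n * r ^ n / (r * r * r) := by
    rw [show 2*(n-1)-1 = n + n - (1+1+1) by ring, Real.rpow_sub hr, Real.rpow_add hr,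
      Real.rpow_add hr, Real.rpow_add hr, Real.rpow_one]
  have hcs : s ^ 2 + c ^ 2 = 1 := sin_sq_add_cos_sq _
  rw [e1, e2, e3, e4, e5]
  have hA : (0:ℝ) < r ^ n := Real.rpow_pos_of_pos hr n
  set A := r ^ n with hAdef
  field_simp
  ring_nf
end

section
/- Let n ∈ ℝ, k_n = n − 1, and k₀, k₁, k₂ ∈ ℝ. Consider the Hamiltonian H_na = T_n + U_na with U_na = k₀/r^{2k_n} + r^{2k_n}[k₁/cos²(k_n φ) + k₂/sin²(k_n φ)], defined on the open subset of Ω = {r > 0} where cos(k_n φ) ≠ 0 and sin(k_n φ) ≠ 0. Then the three functions J_a1 = P₁² + 2(k₀/r^{2k_n}) cos²(k_n φ) + 2k₁ r^{2k_n} sec²(k_n φ), J_a2 = P₂² + 2(k₀/r^{2k_n}) sin²(k_n φ) + 2k₂ r^{2k_n} csc²(k_n φ) and J_a3 = p_φ² + 2[k₁/cos²(k_n φ) + k₂/sin²(k_n φ)] are constants of motion: their Poisson brackets with H_na vanish at every point of that open set. -/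
set_option maxHeartbeats 2000000

open Real

/-- The oscillator-related Hamiltonian H_na = T_n + U_na,
U_na = k₀/r^(2k_n) + r^(2k_n) [k₁/cos²(k_n φ) + k₂/sin²(k_n φ)]. -/
noncomputable def HnaFull (n k0 k1 k2 : ℝ) (r φ pr pφ : ℝ) : ℝ :=
  Tkin n r φ pr pφ + k0 / r ^ (2*(n-1))
    + r ^ (2*(n-1)) * (k1 / (cos ((n-1)*φ))^2 + k2 / (sin ((n-1)*φ))^2)

/-- J_a1, J_a2 and J_a3 are constants of motion of H_na on the open subset of
Ω = {r > 0} where cos(k_n φ) ≠ 0 and sin(k_n φ) ≠ 0. -/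
theorem HnaFull_superintegrable (n k0 k1 k2 : ℝ) :
    ∀ r φ pr pφ : ℝ, 0 < r → cos ((n-1)*φ) ≠ 0 → sin ((n-1)*φ) ≠ 0 →
      pb (fun r φ pr pφ => (P1 n r φ pr pφ)^2
            + 2 * (k0 / r ^ (2*(n-1))) * (cos ((n-1)*φ))^2
            + 2 * k1 * r ^ (2*(n-1)) * (1 / cos ((n-1)*φ))^2)
         (HnaFull n k0 k1 k2) r φ pr pφ = 0 ∧
      pb (fun r φ pr pφ => (P2 n r φ pr pφ)^2
            + 2 * (k0 / r ^ (2*(n-1))) * (sin ((n-1)*φ))^2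
            + 2 * k2 * r ^ (2*(n-1)) * (1 / sin ((n-1)*φ))^2)
         (HnaFull n k0 k1 k2) r φ pr pφ = 0 ∧
      pb (fun _ φ _ pφ => pφ^2
            + 2 * (k1 / (cos ((n-1)*φ))^2 + k2 / (sin ((n-1)*φ))^2))
         (HnaFull n k0 k1 k2) r φ pr pφ = 0 := by
  intro r φ pr pφ hr hcc hss
  have hrne : r ≠ 0 := ne_of_gt hr
  simp only [pb, HnaFull, Tkin, P1, P2]
  set c := Real.cos ((n-1)*φ) with hc
  set s := Real.sin ((n-1)*φ) with hs
  set A := r ^ n with hA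
  set T := r ^ (2*n) with hT
  set B := r ^ (2*(n-1)) with hB
  have hBne : r ^ (2*(n-1)) ≠ 0 := (Real.rpow_pos_of_pos hr _).ne'
  have hc2 : c^2 ≠ 0 := pow_ne_zero _ hcc
  have hs2 : s^2 ≠ 0 := pow_ne_zero _ hss
  have hA0 : A ≠ 0 := by rw [hA]; exact (Real.rpow_pos_of_pos hr _).ne'
  have f2n : r ^ (2*n) = A^2 := by rw [hA, two_mul, Real.rpow_add hr, sq]
  have fe : r ^ (2*(n-1)) = A^2/r^2 := by
    rw [show 2*(n-1) = 2*n - (2:ℕ) by push_cast; ring, Real.rpow_sub hr, f2n, Real.rpow_natCast]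
  have f2n1 : r ^ (2*n - 1) = A^2/r := by rw [Real.rpow_sub hr, f2n, Real.rpow_one]
  have fe1 : r ^ (2*(n-1) - 1) = A^2/r^3 := by
    rw [show 2*(n-1)-1 = 2*n - (3:ℕ) by push_cast; ring, Real.rpow_sub hr, f2n, Real.rpow_natCast]
  have fn1 : r ^ (n-1) = A/r := by rw [Real.rpow_sub hr, Real.rpow_one, hA]
  have hBA : B = A^2/r^2 := by rw [hB, fe]
  have hcx : HasDerivAt (fun x => Real.cos ((n-1)*x)) (-s * (n-1)) φ := by
    have := ((hasDerivAt_id φ).const_mul (n-1)).cos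
    simpa [← hs] using this
  have hsx : HasDerivAt (fun x => Real.sin ((n-1)*x)) (c * (n-1)) φ := by
    have := ((hasDerivAt_id φ).const_mul (n-1)).sin
    simpa [← hc] using this
  have e1 : HasDerivAt (fun x : ℝ => x ^ (2*n)) ((2*n) * r^(2*n-1)) r :=
    Real.hasDerivAt_rpow_const (Or.inl hrne)
  have e2 : HasDerivAt (fun x : ℝ => x ^ (2*(n-1))) ((2*(n-1)) * r^(2*(n-1)-1)) r :=
    Real.hasDerivAt_rpow_const (Or.inl hrne)
  have ePn : HasDerivAt (fun x : ℝ => x ^ n) (n * r^(n-1)) r :=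
    Real.hasDerivAt_rpow_const (Or.inl hrne)
  -- H derivatives
  have dH_pr : deriv (fun x => 1/2 * T * (x^2 + pφ^2/r^2) + k0/B + B * (k1/c^2 + k2/s^2)) pr
      = A^2 * pr := by
    have h : HasDerivAt (fun x : ℝ => 1/2 * T * (x^2 + pφ^2/r^2) + k0/B + B * (k1/c^2 + k2/s^2))
        (A^2 * pr) pr := by
      have h0 := ((((hasDerivAt_pow 2 pr).add_const (pφ^2/r^2)).const_mul
        (1/2 * T)).add_const (k0/B)).add_const (B * (k1/c^2 + k2/s^2))
      refine h0.congr_deriv (Eq.symm ?_)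
      rw [hT, f2n]; push_cast; ring
    exact h.deriv
  have dH_pp : deriv (fun x => 1/2 * T * (pr^2 + x^2/r^2) + k0/B + B * (k1/c^2 + k2/s^2)) pφ
      = A^2 * pφ / r^2 := by
    have h : HasDerivAt (fun x : ℝ => 1/2 * T * (pr^2 + x^2/r^2) + k0/B + B * (k1/c^2 + k2/s^2))
        (A^2 * pφ / r^2) pφ := by
      have h0 := (((((hasDerivAt_pow 2 pφ).div_const (r^2)).const_add (pr^2)).const_mul
        (1/2 * T)).add_const (k0/B)).add_const (B * (k1/c^2 + k2/s^2))
      refine h0.congr_deriv (Eq.symm ?_)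
      rw [hT, f2n]; push_cast; ring
    exact h.deriv
  have dH_r : deriv (fun x => 1/2 * x^(2*n) * (pr^2 + pφ^2/x^2) + k0/x^(2*(n-1))
        + x^(2*(n-1)) * (k1/c^2 + k2/s^2)) r
      = n*A^2*pr^2/r + (n-1)*A^2*pφ^2/r^3 - 2*(n-1)*k0*r/A^2
        + 2*(n-1)*(A^2/r^3)*(k1/c^2 + k2/s^2) := by
    have h : HasDerivAt (fun x : ℝ => 1/2 * x^(2*n) * (pr^2 + pφ^2/x^2) + k0/x^(2*(n-1))
        + x^(2*(n-1)) * (k1/c^2 + k2/s^2))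
        (n*A^2*pr^2/r + (n-1)*A^2*pφ^2/r^3 - 2*(n-1)*k0*r/A^2
          + 2*(n-1)*(A^2/r^3)*(k1/c^2 + k2/s^2)) r := by
      have e3 := (hasDerivAt_const r (pφ^2)).div (hasDerivAt_pow 2 r) (pow_ne_zero 2 hrne)
      have h0 := (((e1.const_mul (1/2)).mul (e3.const_add (pr^2))).add
        ((hasDerivAt_const r k0).div e2 hBne)).add (e2.mul_const (k1/c^2 + k2/s^2))
      refine h0.congr_deriv (Eq.symm ?_)
      simp only [Pi.add_apply, Pi.sub_apply, Pi.mul_apply, Pi.div_apply, Pi.pow_apply, id_eq, Nat.reduceSub, pow_one]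
      rw [f2n, f2n1, fe, fe1]
      field_simp
      ring
    exact h.deriv
  have dH_phi : deriv (fun x => 1/2 * T * (pr^2 + pφ^2/r^2) + k0/B
        + B * (k1 / Real.cos ((n-1)*x)^2 + k2 / Real.sin ((n-1)*x)^2)) φ
      = (A^2/r^2) * (2*(n-1)) * (k1*s/c^3 - k2*c/s^3) := by
    have h : HasDerivAt (fun x => 1/2 * T * (pr^2 + pφ^2/r^2) + k0/B
        + B * (k1 / Real.cos ((n-1)*x)^2 + k2 / Real.sin ((n-1)*x)^2))
        ((A^2/r^2) * (2*(n-1)) * (k1*s/c^3 - k2*c/s^3)) φ := by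
      have h1 := (hasDerivAt_const φ k1).div (hcx.pow 2) (by exact hc2)
      have h2 := (hasDerivAt_const φ k2).div (hsx.pow 2) (by exact hs2)
      have h0 := ((h1.add h2).const_mul B).const_add (1/2 * T * (pr^2 + pφ^2/r^2) + k0/B)
      refine h0.congr_deriv (Eq.symm ?_)
      simp only [Pi.add_apply, Pi.sub_apply, Pi.mul_apply, Pi.div_apply, Pi.pow_apply, id_eq, Nat.reduceSub, pow_one]
      rw [← hc, ← hs, hBA]
      field_simp
      ring
    exact h.deriv
  -- F1 derivatives
  have dF1_pr : deriv (fun x => (A * (x * c + pφ/r * s))^2 + 2*(k0/B)*c^2 + 2*k1*B*(1/c)^2) pr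
      = 2*(A*(pr*c + pφ*s/r))*(A*c) := by
    have h : HasDerivAt (fun x : ℝ => (A * (x * c + pφ/r * s))^2 + 2*(k0/B)*c^2 + 2*k1*B*(1/c)^2)
        (2*(A*(pr*c + pφ*s/r))*(A*c)) pr := by
      have h0 := (((((hasDerivAt_id pr).mul_const c).add_const (pφ/r*s)).const_mul A).pow
        2).add_const (2*(k0/B)*c^2) |>.add_const (2*k1*B*(1/c)^2)
      refine h0.congr_deriv (Eq.symm ?_)
      simp only [id_eq]; push_cast; ring
    exact h.deriv
  have dF1_pp : deriv (fun x => (A * (pr * c + x/r * s))^2 + 2*(k0/B)*c^2 + 2*k1*B*(1/c)^2) pφ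
      = 2*(A*(pr*c + pφ*s/r))*(A*s/r) := by
    have h : HasDerivAt (fun x : ℝ => (A * (pr * c + x/r * s))^2 + 2*(k0/B)*c^2 + 2*k1*B*(1/c)^2)
        (2*(A*(pr*c + pφ*s/r))*(A*s/r)) pφ := by
      have h0 := ((((((hasDerivAt_id pφ).div_const r).mul_const s).const_add (pr*c)).const_mul
        A).pow 2).add_const (2*(k0/B)*c^2) |>.add_const (2*k1*B*(1/c)^2)
      refine h0.congr_deriv (Eq.symm ?_)
      simp only [id_eq]; push_cast; ring
    exact h.deriv
  have dF1_r : deriv (fun x => (x ^ n * (pr * c + pφ/x * s))^2 + 2*(k0/x^(2*(n-1)))*c^2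
        + 2*k1*x^(2*(n-1))*(1/c)^2) r
      = 2*(A*(pr*c + pφ*s/r))*(n*(A/r)*(pr*c + pφ*s/r) - A*pφ*s/r^2)
        - 4*(n-1)*k0*c^2*r/A^2 + 4*(n-1)*k1*(A^2/r^3)/c^2 := by
    have h : HasDerivAt (fun x : ℝ => (x ^ n * (pr * c + pφ/x * s))^2 + 2*(k0/x^(2*(n-1)))*c^2
        + 2*k1*x^(2*(n-1))*(1/c)^2)
        (2*(A*(pr*c + pφ*s/r))*(n*(A/r)*(pr*c + pφ*s/r) - A*pφ*s/r^2)
          - 4*(n-1)*k0*c^2*r/A^2 + 4*(n-1)*k1*(A^2/r^3)/c^2) r := by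
      have hin := ((((hasDerivAt_const r pφ).div (hasDerivAt_id r) hrne).mul_const
        s).const_add (pr*c))
      have h0 := (((ePn.mul hin).pow 2).add
        ((((hasDerivAt_const r k0).div e2 hBne).const_mul 2).mul_const (c^2))).add
        ((e2.const_mul (2*k1)).mul_const ((1/c)^2))
      refine h0.congr_deriv (Eq.symm ?_)
      simp only [Pi.add_apply, Pi.sub_apply, Pi.mul_apply, Pi.div_apply, Pi.pow_apply, id_eq, Nat.reduceSub, pow_one]
      rw [fn1, fe, fe1, ← hA]
      field_simp
      ring
    exact h.deriv
  have dF1_phi : deriv (fun x => (A * (pr * Real.cos ((n-1)*x) + pφ/r * Real.sin ((n-1)*x)))^2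
        + 2*(k0/B)*Real.cos ((n-1)*x)^2 + 2*k1*B*(1/Real.cos ((n-1)*x))^2) φ
      = 2*(A*(pr*c + pφ*s/r))*(A*(n-1)*(pφ*c/r - pr*s))
        - 4*(n-1)*k0*(r^2/A^2)*c*s + 4*(n-1)*k1*(A^2/r^2)*s/c^3 := by
    have h : HasDerivAt (fun x => (A * (pr * Real.cos ((n-1)*x) + pφ/r * Real.sin ((n-1)*x)))^2
        + 2*(k0/B)*Real.cos ((n-1)*x)^2 + 2*k1*B*(1/Real.cos ((n-1)*x))^2)
        (2*(A*(pr*c + pφ*s/r))*(A*(n-1)*(pφ*c/r - pr*s))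
          - 4*(n-1)*k0*(r^2/A^2)*c*s + 4*(n-1)*k1*(A^2/r^2)*s/c^3) φ := by
      have hin := ((hcx.const_mul pr).add (hsx.const_mul (pφ/r))).const_mul A
      have h1 := (hcx.pow 2).const_mul (2*(k0/B))
      have h2 := (((hasDerivAt_const φ 1).div hcx (by rw [← hc]; exact hcc)).pow 2).const_mul
        (2*k1*B)
      have h0 := ((hin.pow 2).add h1).add h2
      refine h0.congr_deriv (Eq.symm ?_)
      simp only [Pi.add_apply, Pi.sub_apply, Pi.mul_apply, Pi.div_apply, Pi.pow_apply, id_eq, Nat.reduceSub, pow_one]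
      rw [← hc, ← hs, hBA]
      field_simp
      ring
    exact h.deriv
  -- F2 derivatives
  have dF2_pr : deriv (fun x => (A * (x * s - pφ/r * c))^2 + 2*(k0/B)*s^2 + 2*k2*B*(1/s)^2) pr
      = 2*(A*(pr*s - pφ*c/r))*(A*s) := by
    have h : HasDerivAt (fun x : ℝ => (A * (x * s - pφ/r * c))^2 + 2*(k0/B)*s^2 + 2*k2*B*(1/s)^2)
        (2*(A*(pr*s - pφ*c/r))*(A*s)) pr := by
      have h0 := (((((hasDerivAt_id pr).mul_const s).sub_const (pφ/r*c)).const_mul A).pow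
        2).add_const (2*(k0/B)*s^2) |>.add_const (2*k2*B*(1/s)^2)
      refine h0.congr_deriv (Eq.symm ?_)
      simp only [id_eq]; push_cast; ring
    exact h.deriv
  have dF2_pp : deriv (fun x => (A * (pr * s - x/r * c))^2 + 2*(k0/B)*s^2 + 2*k2*B*(1/s)^2) pφ
      = 2*(A*(pr*s - pφ*c/r))*(-(A*c)/r) := by
    have h : HasDerivAt (fun x : ℝ => (A * (pr * s - x/r * c))^2 + 2*(k0/B)*s^2 + 2*k2*B*(1/s)^2)
        (2*(A*(pr*s - pφ*c/r))*(-(A*c)/r)) pφ := by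
      have h0 := ((((((hasDerivAt_id pφ).div_const r).mul_const c).const_sub (pr*s)).const_mul
        A).pow 2).add_const (2*(k0/B)*s^2) |>.add_const (2*k2*B*(1/s)^2)
      refine h0.congr_deriv (Eq.symm ?_)
      simp only [id_eq]; push_cast; ring
    exact h.deriv
  have dF2_r : deriv (fun x => (x ^ n * (pr * s - pφ/x * c))^2 + 2*(k0/x^(2*(n-1)))*s^2
        + 2*k2*x^(2*(n-1))*(1/s)^2) r
      = 2*(A*(pr*s - pφ*c/r))*(n*(A/r)*(pr*s - pφ*c/r) + A*pφ*c/r^2)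
        - 4*(n-1)*k0*s^2*r/A^2 + 4*(n-1)*k2*(A^2/r^3)/s^2 := by
    have h : HasDerivAt (fun x : ℝ => (x ^ n * (pr * s - pφ/x * c))^2 + 2*(k0/x^(2*(n-1)))*s^2
        + 2*k2*x^(2*(n-1))*(1/s)^2)
        (2*(A*(pr*s - pφ*c/r))*(n*(A/r)*(pr*s - pφ*c/r) + A*pφ*c/r^2)
          - 4*(n-1)*k0*s^2*r/A^2 + 4*(n-1)*k2*(A^2/r^3)/s^2) r := by
      have hin := ((((hasDerivAt_const r pφ).div (hasDerivAt_id r) hrne).mul_const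
        c).const_sub (pr*s))
      have h0 := (((ePn.mul hin).pow 2).add
        ((((hasDerivAt_const r k0).div e2 hBne).const_mul 2).mul_const (s^2))).add
        ((e2.const_mul (2*k2)).mul_const ((1/s)^2))
      refine h0.congr_deriv (Eq.symm ?_)
      simp only [Pi.add_apply, Pi.sub_apply, Pi.mul_apply, Pi.div_apply, Pi.pow_apply, id_eq, Nat.reduceSub, pow_one]
      rw [fn1, fe, fe1, ← hA]
      field_simp
      ring
    exact h.deriv
  have dF2_phi : deriv (fun x => (A * (pr * Real.sin ((n-1)*x) - pφ/r * Real.cos ((n-1)*x)))^2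
        + 2*(k0/B)*Real.sin ((n-1)*x)^2 + 2*k2*B*(1/Real.sin ((n-1)*x))^2) φ
      = 2*(A*(pr*s - pφ*c/r))*(A*(n-1)*(pr*c + pφ*s/r))
        + 4*(n-1)*k0*(r^2/A^2)*c*s - 4*(n-1)*k2*(A^2/r^2)*c/s^3 := by
    have h : HasDerivAt (fun x => (A * (pr * Real.sin ((n-1)*x) - pφ/r * Real.cos ((n-1)*x)))^2
        + 2*(k0/B)*Real.sin ((n-1)*x)^2 + 2*k2*B*(1/Real.sin ((n-1)*x))^2)
        (2*(A*(pr*s - pφ*c/r))*(A*(n-1)*(pr*c + pφ*s/r))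
          + 4*(n-1)*k0*(r^2/A^2)*c*s - 4*(n-1)*k2*(A^2/r^2)*c/s^3) φ := by
      have hin := ((hsx.const_mul pr).sub (hcx.const_mul (pφ/r))).const_mul A
      have h1 := (hsx.pow 2).const_mul (2*(k0/B))
      have h2 := (((hasDerivAt_const φ 1).div hsx (by rw [← hs]; exact hss)).pow 2).const_mul
        (2*k2*B)
      have h0 := ((hin.pow 2).add h1).add h2
      refine h0.congr_deriv (Eq.symm ?_)
      simp only [Pi.add_apply, Pi.sub_apply, Pi.mul_apply, Pi.div_apply, Pi.pow_apply, id_eq, Nat.reduceSub, pow_one]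
      rw [← hc, ← hs, hBA]
      field_simp
      ring
    exact h.deriv
  -- F3 derivatives
  have dF3_phi : deriv (fun x => pφ^2
        + 2 * (k1 / Real.cos ((n-1)*x)^2 + k2 / Real.sin ((n-1)*x)^2)) φ
      = 2 * (2*(n-1)) * (k1*s/c^3 - k2*c/s^3) := by
    have h : HasDerivAt (fun x => pφ^2
        + 2 * (k1 / Real.cos ((n-1)*x)^2 + k2 / Real.sin ((n-1)*x)^2))
        (2 * (2*(n-1)) * (k1*s/c^3 - k2*c/s^3)) φ := by
      have h1 := (hasDerivAt_const φ k1).div (hcx.pow 2) (by exact hc2)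
      have h2 := (hasDerivAt_const φ k2).div (hsx.pow 2) (by exact hs2)
      have h0 := ((h1.add h2).const_mul 2).const_add (pφ^2)
      refine h0.congr_deriv (Eq.symm ?_)
      simp only [Pi.add_apply, Pi.sub_apply, Pi.mul_apply, Pi.div_apply, Pi.pow_apply, id_eq, Nat.reduceSub, pow_one]
      rw [← hc, ← hs]
      field_simp
      ring
    exact h.deriv
  have dF3_pp : deriv (fun x => x^2 + 2 * (k1/c^2 + k2/s^2)) pφ = 2*pφ := by
    have h : HasDerivAt (fun x : ℝ => x^2 + 2 * (k1/c^2 + k2/s^2)) (2*pφ) pφ := by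
      have h0 := (hasDerivAt_pow 2 pφ).add_const (2 * (k1/c^2 + k2/s^2))
      refine h0.congr_deriv (Eq.symm ?_)
      push_cast; ring
    exact h.deriv
  have hpy : s^2 + c^2 = 1 := by rw [hs, hc]; exact sin_sq_add_cos_sq _
  refine ⟨?_, ?_, ?_⟩
  · rw [dF1_r, dH_pr, dF1_pr, dH_r, dF1_phi, dH_pp, dF1_pp, dH_phi]
    field_simp
    linear_combination ((-4:ℝ)*c*s^2*r*A^4*pr*n*k1 + (4:ℝ)*c*s^2*r*A^4*pr*k1 + (-4:ℝ)*s^3*A^4*pφ*n*k1 + (4:ℝ)*s^3*A^4*pφ*k1) * hpy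
  · rw [dF2_r, dH_pr, dF2_pr, dH_r, dF2_phi, dH_pp, dF2_pp, dH_phi]
    field_simp
    linear_combination ((-4:ℝ)*c^2*s*r*A^4*pr*n*k2 + (4:ℝ)*c^2*s*r*A^4*pr*k2 + (4:ℝ)*c^3*A^4*pφ*n*k2 + (-4:ℝ)*c^3*A^4*pφ*k2) * hpy
  · rw [(hasDerivAt_const r (pφ^2 + 2 * (k1/c^2 + k2/s^2))).deriv,
      (hasDerivAt_const pr (pφ^2 + 2 * (k1/c^2 + k2/s^2))).deriv,
      dF3_phi, dF3_pp, dH_pp, dH_phi]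
    ring
end

section
/- Let n ∈ ℝ, k_n = n − 1, and k₀, k₁, k₂ ∈ ℝ. Consider the Hamiltonian H_na' = T_n + k₀/r^{2k_n} + (1/r^{k_n})(k₁ cos(k_n φ) + k₂ sin(k_n φ)) on Ω = {r > 0}. Then the function J_a3' = 2k₀ p_φ + k₂ P₁ − k₁ P₂, which is linear in the momenta, is a constant of motion: {J_a3', H_na'} = 0 at every point of Ω. -/
open Real

/-- The Hamiltonian H_na' = T_n + k₀/r^(2k_n) + (1/r^(k_n))(k₁ cos(k_n φ) + k₂ sin(k_n φ)). -/
noncomputable def Hnap (n k0 k1 k2 : ℝ) (r φ pr pφ : ℝ) : ℝ :=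
  Tkin n r φ pr pφ + k0 / r ^ (2*(n-1))
    + (1 / r ^ (n-1)) * (k1 * cos ((n-1)*φ) + k2 * sin ((n-1)*φ))

private lemma hd_congr {f : ℝ → ℝ} {a b x : ℝ} (h : HasDerivAt f a x) (hab : a = b) :
    HasDerivAt f b x := hab ▸ h

/-- The function J_a3' = 2k₀ p_φ + k₂ P₁ − k₁ P₂, linear in the momenta, is a
constant of motion of H_na' on Ω = {r > 0}. -/
theorem Ja3p_constant_of_motion (n k0 k1 k2 : ℝ) :
    ∀ r φ pr pφ : ℝ, 0 < r →
      pb (fun r φ pr pφ => 2 * k0 * pφ + k2 * P1 n r φ pr pφ - k1 * P2 n r φ pr pφ)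
         (Hnap n k0 k1 k2) r φ pr pφ = 0 := by
  intro r φ pr pφ hr
  have hr' : r ≠ 0 := hr.ne'
  simp only [pb, Hnap, Tkin, P1, P2]
  set c := Real.cos ((n - 1) * φ) with hc
  set s := Real.sin ((n - 1) * φ) with hs
  -- ∂J/∂r
  have hJr : HasDerivAt
      (fun x : ℝ => 2 * k0 * pφ + k2 * (x ^ n * (pr * c + pφ / x * s)) -
        k1 * (x ^ n * (pr * s - pφ / x * c)))
      (k2 * (n * r ^ (n - 1) * (pr * c + pφ / r * s) - r ^ n * (pφ * s / r ^ 2))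
        - k1 * (n * r ^ (n - 1) * (pr * s - pφ / r * c) + r ^ n * (pφ * c / r ^ 2))) r := by
    have h1 := (Real.hasDerivAt_rpow_const (x := r) (p := n) (Or.inl hr')).mul
      ((((hasDerivAt_const r pφ).div (hasDerivAt_id r) hr').mul_const s).const_add (pr * c))
    have h2 := (Real.hasDerivAt_rpow_const (x := r) (p := n) (Or.inl hr')).mul
      ((((hasDerivAt_const r pφ).div (hasDerivAt_id r) hr').mul_const c).const_sub (pr * s))
    exact hd_congr (((h1.const_mul k2).const_add (2 * k0 * pφ)).sub (h2.const_mul k1))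
      (by simp only [id_eq, Pi.div_apply]; ring)
  -- ∂H/∂pr
  have hHpr : HasDerivAt
      (fun x : ℝ => 1 / 2 * r ^ (2 * n) * (x ^ 2 + pφ ^ 2 / r ^ 2) + k0 / r ^ (2 * (n - 1)) +
        1 / r ^ (n - 1) * (k1 * c + k2 * s))
      (r ^ (2 * n) * pr) pr := by
    exact hd_congr (((((hasDerivAt_pow 2 pr).add_const (pφ ^ 2 / r ^ 2)).const_mul
      (1 / 2 * r ^ (2 * n))).add_const (k0 / r ^ (2 * (n - 1)))).add_const
      (1 / r ^ (n - 1) * (k1 * c + k2 * s)))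
      (by push_cast; ring)
  -- ∂J/∂pr
  have hJpr : HasDerivAt
      (fun x : ℝ => 2 * k0 * pφ + k2 * (r ^ n * (x * c + pφ / r * s)) -
        k1 * (r ^ n * (x * s - pφ / r * c)))
      (k2 * (r ^ n * c) - k1 * (r ^ n * s)) pr := by
    have h1 := ((((hasDerivAt_id pr).mul_const c).add_const (pφ / r * s)).const_mul
      (r ^ n)).const_mul k2
    have h2 := ((((hasDerivAt_id pr).mul_const s).sub_const (pφ / r * c)).const_mul
      (r ^ n)).const_mul k1
    exact hd_congr ((h1.const_add (2 * k0 * pφ)).sub h2) (by ring)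
  -- ∂H/∂r
  have hHr : HasDerivAt
      (fun x : ℝ => 1 / 2 * x ^ (2 * n) * (pr ^ 2 + pφ ^ 2 / x ^ 2) + k0 / x ^ (2 * (n - 1)) +
        1 / x ^ (n - 1) * (k1 * c + k2 * s))
      (n * r ^ (2 * n - 1) * (pr ^ 2 + pφ ^ 2 / r ^ 2) - r ^ (2 * n) * pφ ^ 2 * r / (r ^ 2) ^ 2
        - k0 * (2 * (n - 1)) * r ^ (2 * (n - 1) - 1) / (r ^ (2 * (n - 1))) ^ 2
        - (n - 1) * r ^ (n - 1 - 1) / (r ^ (n - 1)) ^ 2 * (k1 * c + k2 * s)) r := by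
    have h1 := ((Real.hasDerivAt_rpow_const (x := r) (p := 2 * n) (Or.inl hr')).const_mul
      (1 / 2)).mul (((hasDerivAt_const r (pφ ^ 2)).div (hasDerivAt_pow 2 r)
      (pow_ne_zero 2 hr')).const_add (pr ^ 2))
    have h2 := (hasDerivAt_const r k0).div
      (Real.hasDerivAt_rpow_const (x := r) (p := 2 * (n - 1)) (Or.inl hr'))
      (Real.rpow_pos_of_pos hr _).ne'
    have h3 := ((hasDerivAt_const r 1).div
      (Real.hasDerivAt_rpow_const (x := r) (p := n - 1) (Or.inl hr'))
      (Real.rpow_pos_of_pos hr _).ne').mul_const (k1 * c + k2 * s)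
    exact hd_congr ((h1.add h2).add h3) (by push_cast [Pi.div_apply]; ring)
  -- ∂J/∂φ
  have hJφ : HasDerivAt
      (fun x : ℝ => 2 * k0 * pφ +
        k2 * (r ^ n * (pr * Real.cos ((n - 1) * x) + pφ / r * Real.sin ((n - 1) * x))) -
        k1 * (r ^ n * (pr * Real.sin ((n - 1) * x) - pφ / r * Real.cos ((n - 1) * x))))
      ((n - 1) * (k2 * (r ^ n * (-(pr * s) + pφ / r * c)) -
        k1 * (r ^ n * (pr * c + pφ / r * s)))) φ := by
    have hk : HasDerivAt (fun x : ℝ => (n - 1) * x) ((n - 1) * 1) φ :=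
      (hasDerivAt_id φ).const_mul (n - 1)
    have h1 := (((hk.cos.const_mul pr).add (hk.sin.const_mul (pφ / r))).const_mul
      (r ^ n)).const_mul k2
    have h2 := (((hk.sin.const_mul pr).sub (hk.cos.const_mul (pφ / r))).const_mul
      (r ^ n)).const_mul k1
    exact hd_congr ((h1.const_add (2 * k0 * pφ)).sub h2)
      (by simp only [id_eq, ← hc, ← hs]; ring)
  -- ∂H/∂pφ
  have hHpφ : HasDerivAt
      (fun x : ℝ => 1 / 2 * r ^ (2 * n) * (pr ^ 2 + x ^ 2 / r ^ 2) + k0 / r ^ (2 * (n - 1)) +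
        1 / r ^ (n - 1) * (k1 * c + k2 * s))
      (r ^ (2 * n) * pφ / r ^ 2) pφ := by
    exact hd_congr ((((((hasDerivAt_pow 2 pφ).div_const (r ^ 2)).const_add
      (pr ^ 2)).const_mul (1 / 2 * r ^ (2 * n))).add_const
      (k0 / r ^ (2 * (n - 1)))).add_const (1 / r ^ (n - 1) * (k1 * c + k2 * s)))
      (by push_cast; ring)
  -- ∂J/∂pφ
  have hJpφ : HasDerivAt
      (fun x : ℝ => 2 * k0 * x + k2 * (r ^ n * (pr * c + x / r * s)) -
        k1 * (r ^ n * (pr * s - x / r * c)))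
      (2 * k0 + k2 * (r ^ n * (s / r)) + k1 * (r ^ n * (c / r))) pφ := by
    have h0 := (hasDerivAt_id pφ).const_mul (2 * k0)
    have h1 := (((((hasDerivAt_id pφ).div_const r).mul_const s).const_add
      (pr * c)).const_mul (r ^ n)).const_mul k2
    have h2 := (((((hasDerivAt_id pφ).div_const r).mul_const c).const_sub
      (pr * s)).const_mul (r ^ n)).const_mul k1
    exact hd_congr ((h0.add h1).sub h2) (by ring)
  -- ∂H/∂φ
  have hHφ : HasDerivAt
      (fun x : ℝ => 1 / 2 * r ^ (2 * n) * (pr ^ 2 + pφ ^ 2 / r ^ 2) + k0 / r ^ (2 * (n - 1)) +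
        1 / r ^ (n - 1) * (k1 * Real.cos ((n - 1) * x) + k2 * Real.sin ((n - 1) * x)))
      (1 / r ^ (n - 1) * (n - 1) * (k2 * c - k1 * s)) φ := by
    have hk : HasDerivAt (fun x : ℝ => (n - 1) * x) ((n - 1) * 1) φ :=
      (hasDerivAt_id φ).const_mul (n - 1)
    exact hd_congr ((((hk.cos.const_mul k1).add (hk.sin.const_mul k2)).const_mul
      (1 / r ^ (n - 1))).const_add
      (1 / 2 * r ^ (2 * n) * (pr ^ 2 + pφ ^ 2 / r ^ 2) + k0 / r ^ (2 * (n - 1))))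
      (by simp only [id_eq, ← hc, ← hs]; ring)
  rw [hJr.deriv, hHpr.deriv, hJpr.deriv, hHr.deriv, hJφ.deriv, hHpφ.deriv, hJpφ.deriv,
    hHφ.deriv]
  have e1 : r ^ (n - 1) = r ^ n / r := by rw [Real.rpow_sub hr, Real.rpow_one]
  have e2 : r ^ (2 * n) = r ^ n * r ^ n := by
    rw [show (2:ℝ) * n = n + n by ring, Real.rpow_add hr]
  have e3 : r ^ (2 * n - 1) = r ^ n * r ^ n / r := by
    rw [Real.rpow_sub hr, Real.rpow_one, e2]
  have e4 : r ^ (2 * (n - 1)) = r ^ n / r * (r ^ n / r) := by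
    rw [show (2:ℝ) * (n - 1) = (n - 1) + (n - 1) by ring, Real.rpow_add hr, e1]
  have e5 : r ^ (2 * (n - 1) - 1) = r ^ n / r * (r ^ n / r) / r := by
    rw [Real.rpow_sub hr, Real.rpow_one, e4]
  have e6 : r ^ (n - 1 - 1) = r ^ n / r / r := by
    rw [Real.rpow_sub hr, Real.rpow_one, e1]
  have hA : r ^ n ≠ 0 := (Real.rpow_pos_of_pos hr n).ne'
  rw [e5, e4, e3, e6, e2, e1]
  field_simp
  ring
end

section
/- Let n ∈ ℝ, k_n = n − 1, and k₀, k₁, k₂ ∈ ℝ. Consider the Hamiltonian H_nb = T_n + U_nb with U_nb = (k₀/r^{2k_n})(cos²(k_n φ) + 4 sin²(k_n φ)) + r^{2k_n} k₁/cos²(k_n φ) + (k₂/r^{k_n}) sin(k_n φ), defined on the open subset of Ω = {r > 0} where cos(k_n φ) ≠ 0. Then the two functions J_b1 = P₁² + 2(k₀/r^{2k_n}) cos²(k_n φ) + 2k₁ r^{2k_n} sec²(k_n φ) and J_b2 = P₂² + 8(k₀/r^{2k_n}) sin²(k_n φ) + (2k₂/r^{k_n}) sin(k_n φ) are constants of motion: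 {J_b1, H_nb} = 0 and {J_b2, H_nb} = 0 at every point of that open set. -/
open Real

/-- The Hamiltonian H_nb = T_n + U_nb with
U_nb = (k₀/r^(2k_n))(cos²(k_n φ) + 4 sin²(k_n φ)) + r^(2k_n) k₁/cos²(k_n φ)
      + (k₂/r^(k_n)) sin(k_n φ). -/
noncomputable def Hnb (n k0 k1 k2 : ℝ) (r φ pr pφ : ℝ) : ℝ :=
  Tkin n r φ pr pφ
    + (k0 / r ^ (2*(n-1))) * ((cos ((n-1)*φ))^2 + 4 * (sin ((n-1)*φ))^2)
    + r ^ (2*(n-1)) * k1 / (cos ((n-1)*φ))^2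
    + (k2 / r ^ (n-1)) * sin ((n-1)*φ)


lemma hasDerivAt_rpow' (p : ℝ) {r : ℝ} (hr : 0 < r) :
    HasDerivAt (fun x : ℝ => x ^ p) (p * r ^ p / r) r := by
  have h := Real.hasDerivAt_rpow_const (x := r) (p := p) (Or.inl hr.ne')
  have e : p * r ^ (p - 1) = p * r ^ p / r := by
    rw [Real.rpow_sub hr, Real.rpow_one, mul_div_assoc]
  rwa [e] at h

set_option maxHeartbeats 3200000 in
/-- J_b1 and J_b2 are constants of motion of H_nb on the open subset of
Ω = {r > 0} where cos(k_n φ) ≠ 0. -/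
theorem Hnb_Jb1_Jb2_constants (n k0 k1 k2 : ℝ) :
    ∀ r φ pr pφ : ℝ, 0 < r → cos ((n-1)*φ) ≠ 0 →
      pb (fun r φ pr pφ => (P1 n r φ pr pφ)^2
            + 2 * (k0 / r ^ (2*(n-1))) * (cos ((n-1)*φ))^2
            + 2 * k1 * r ^ (2*(n-1)) * (1 / cos ((n-1)*φ))^2)
         (Hnb n k0 k1 k2) r φ pr pφ = 0 ∧
      pb (fun r φ pr pφ => (P2 n r φ pr pφ)^2
            + 8 * (k0 / r ^ (2*(n-1))) * (sin ((n-1)*φ))^2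
            + (2 * k2 / r ^ (n-1)) * sin ((n-1)*φ))
         (Hnb n k0 k1 k2) r φ pr pφ = 0 := by
  intro r φ pr pφ hr hc
  have hr' : r ≠ 0 := ne_of_gt hr
  have hrp : ∀ p : ℝ, (r : ℝ) ^ p ≠ 0 := fun p => (Real.rpow_pos_of_pos hr p).ne'
  have hxp : ∀ p : ℝ, HasDerivAt (fun x : ℝ => x ^ p) (p * r ^ p / r) r :=
    fun p => hasDerivAt_rpow' p hr
  -- φ-direction basics
  have hkx : HasDerivAt (fun x : ℝ => (n-1)*x) ((n-1)*1) φ := (hasDerivAt_id' (𝕜 := ℝ) (x := φ)).const_mul (n-1)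
  have hcos := hkx.cos
  have hsin := hkx.sin
  have hcos2 := hcos.pow 2
  have hsin2 := hsin.pow 2
  -- derivatives of H
  have hHpr := ((((hasDerivAt_pow 2 pr).add_const (pφ^2/r^2)).const_mul (1/2*r^(2*n))).add_const
      (k0 / r ^ (2*(n-1)) * ((cos ((n-1)*φ))^2 + 4*(sin ((n-1)*φ))^2))).add_const
      (r ^ (2*(n-1)) * k1 / (cos ((n-1)*φ))^2) |>.add_const (k2 / r ^ (n-1) * sin ((n-1)*φ))
  have hHpφ := ((((hasDerivAt_pow 2 pφ).div_const (r^2)).const_add (pr^2)).const_mul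
      (1/2*r^(2*n))).add_const
      (k0 / r ^ (2*(n-1)) * ((cos ((n-1)*φ))^2 + 4*(sin ((n-1)*φ))^2)) |>.add_const
      (r ^ (2*(n-1)) * k1 / (cos ((n-1)*φ))^2) |>.add_const (k2 / r ^ (n-1) * sin ((n-1)*φ))
  have hHr := (((((hxp (2*n)).const_mul (1/2)).mul
        (((hasDerivAt_const r (pφ^2)).div (hasDerivAt_pow 2 r) (pow_ne_zero 2 hr')).const_add
          (pr^2))).add
      (((hasDerivAt_const r k0).div (hxp (2*(n-1))) (hrp _)).mul_const
        ((cos ((n-1)*φ))^2 + 4*(sin ((n-1)*φ))^2))).add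
      (((hxp (2*(n-1))).mul_const k1).div_const ((cos ((n-1)*φ))^2))).add
      (((hasDerivAt_const r k2).div (hxp (n-1)) (hrp _)).mul_const (sin ((n-1)*φ)))
  have hHφ := ((((hcos2.add (hsin2.const_mul 4)).const_mul (k0 / r ^ (2*(n-1)))).const_add
      (1/2*r^(2*n)*(pr^2+pφ^2/r^2))).add
      ((hasDerivAt_const φ (r ^ (2*(n-1)) * k1)).div hcos2 (pow_ne_zero 2 hc))).add
      (hsin.const_mul (k2 / r ^ (n-1)))
  -- derivatives of J1
  have hJ1pr := (((((hasDerivAt_id' (𝕜 := ℝ) (x := pr)).mul_const (cos ((n-1)*φ))).add_const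
        (pφ/r*sin ((n-1)*φ))).const_mul (r^n)).pow 2).add_const
      (2*(k0 / r ^ (2*(n-1)))*(cos ((n-1)*φ))^2) |>.add_const
      (2*k1*r^(2*(n-1))*(1/cos ((n-1)*φ))^2)
  have hJ1pφ := ((((((hasDerivAt_id' (𝕜 := ℝ) (x := pφ)).div_const r).mul_const (sin ((n-1)*φ))).const_add
        (pr*cos ((n-1)*φ))).const_mul (r^n)).pow 2).add_const
      (2*(k0 / r ^ (2*(n-1)))*(cos ((n-1)*φ))^2) |>.add_const
      (2*k1*r^(2*(n-1))*(1/cos ((n-1)*φ))^2)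
  have hpφx := (hasDerivAt_const r pφ).div (hasDerivAt_id' (𝕜 := ℝ) (x := r)) hr'
  have hJ1r := ((((hxp n).mul ((hpφx.mul_const (sin ((n-1)*φ))).const_add
        (pr*cos ((n-1)*φ)))).pow 2).add
      ((((hasDerivAt_const r k0).div (hxp (2*(n-1))) (hrp _)).const_mul 2).mul_const
        ((cos ((n-1)*φ))^2))).add
      (((hxp (2*(n-1))).const_mul (2*k1)).mul_const ((1/cos ((n-1)*φ))^2))
  have hJ1φ := (((((hcos.const_mul pr).add (hsin.const_mul (pφ/r))).const_mul (r^n)).pow 2).add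
      (hcos2.const_mul (2*(k0 / r ^ (2*(n-1)))))).add
      ((((hasDerivAt_const φ 1).div hcos hc).pow 2).const_mul (2*k1*r^(2*(n-1))))
  -- derivatives of J2
  have hJ2pr := (((((hasDerivAt_id' (𝕜 := ℝ) (x := pr)).mul_const (sin ((n-1)*φ))).sub_const
        (pφ/r*cos ((n-1)*φ))).const_mul (r^n)).pow 2).add_const
      (8*(k0 / r ^ (2*(n-1)))*(sin ((n-1)*φ))^2) |>.add_const
      (2*k2 / r ^ (n-1) * sin ((n-1)*φ))
  have hJ2pφ := ((((((hasDerivAt_id' (𝕜 := ℝ) (x := pφ)).div_const r).mul_const (cos ((n-1)*φ))).const_sub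
        (pr*sin ((n-1)*φ))).const_mul (r^n)).pow 2).add_const
      (8*(k0 / r ^ (2*(n-1)))*(sin ((n-1)*φ))^2) |>.add_const
      (2*k2 / r ^ (n-1) * sin ((n-1)*φ))
  have hJ2r := ((((hxp n).mul ((hpφx.mul_const (cos ((n-1)*φ))).const_sub
        (pr*sin ((n-1)*φ)))).pow 2).add
      ((((hasDerivAt_const r k0).div (hxp (2*(n-1))) (hrp _)).const_mul 8).mul_const
        ((sin ((n-1)*φ))^2))).add
      (((hasDerivAt_const r (2*k2)).div (hxp (n-1)) (hrp _)).mul_const (sin ((n-1)*φ)))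
  have hJ2φ := (((((hsin.const_mul pr).sub (hcos.const_mul (pφ/r))).const_mul (r^n)).pow 2).add
      (hsin2.const_mul (8*(k0 / r ^ (2*(n-1)))))).add
      (hsin.const_mul (2*k2 / r ^ (n-1)))
  constructor
  · simp only [pb, Hnb, Tkin, P1, P2]
    erw [hJ1r.deriv, hJ1φ.deriv, hJ1pr.deriv, hJ1pφ.deriv,
        hHr.deriv, hHφ.deriv, hHpr.deriv, hHpφ.deriv]
    simp only [Pi.mul_apply, Pi.div_apply, Pi.pow_apply, Pi.add_apply, Pi.sub_apply]
    have h2n : r ^ (2*n) = r ^ n * r ^ n := by rw [two_mul, Real.rpow_add hr]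
    have hk : r ^ (n-1) = r ^ n / r := by rw [Real.rpow_sub hr, Real.rpow_one]
    have h2k : r ^ (2*(n-1)) = r ^ n * r ^ n / (r*r) := by
      rw [two_mul, Real.rpow_add hr, Real.rpow_sub hr, Real.rpow_one]; ring
    rw [h2n, hk, h2k]
    have hA : r ^ n ≠ 0 := hrp n
    set c := cos ((n-1)*φ) with hcd
    set s := sin ((n-1)*φ) with hsd
    have hs2 : s^2 = 1 - c^2 := by rw [hsd, hcd]; exact Real.sin_sq _
    push_cast
    field_simp
    ring_nf
    linear_combination ((-4) * (r ^ n) ^ 4 * r ^ 1 * c ^ 1 * pr ^ 1 * n ^ 1 * k1 ^ 1 + (4) * (r ^ n) ^ 4 * r ^ 1 * c ^ 1 * pr ^ 1 * k1 ^ 1 + (4) * r ^ 4 * c ^ 4 * s ^ 1 * pφ ^ 1 * n ^ 1 * k0 ^ 1 + (-4) * r ^ 4 * c ^ 4 * s ^ 1 * pφ ^ 1 * k0 ^ 1 + (4) * r ^ 5 * c ^ 5 * pr ^ 1 * n ^ 1 * k0 ^ 1 + (-4) * r ^ 5 * c ^ 5 * pr ^ 1 * k0 ^ 1 + (-4) *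 (r ^ n) ^ 4 * s ^ 1 * pφ ^ 1 * n ^ 1 * k1 ^ 1 + (4) * (r ^ n) ^ 4 * s ^ 1 * pφ ^ 1 * k1 ^ 1) * hs2
  · simp only [pb, Hnb, Tkin, P1, P2]
    erw [hJ2r.deriv, hJ2φ.deriv, hJ2pr.deriv, hJ2pφ.deriv,
        hHr.deriv, hHφ.deriv, hHpr.deriv, hHpφ.deriv]
    simp only [Pi.mul_apply, Pi.div_apply, Pi.pow_apply, Pi.add_apply, Pi.sub_apply]
    have h2n : r ^ (2*n) = r ^ n * r ^ n := by rw [two_mul, Real.rpow_add hr]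
    have hk : r ^ (n-1) = r ^ n / r := by rw [Real.rpow_sub hr, Real.rpow_one]
    have h2k : r ^ (2*(n-1)) = r ^ n * r ^ n / (r*r) := by
      rw [two_mul, Real.rpow_add hr, Real.rpow_sub hr, Real.rpow_one]; ring
    rw [h2n, hk, h2k]
    have hA : r ^ n ≠ 0 := hrp n
    set c := cos ((n-1)*φ) with hcd
    set s := sin ((n-1)*φ) with hsd
    have hs2 : s^2 = 1 - c^2 := by rw [hsd, hcd]; exact Real.sin_sq _
    push_cast
    field_simp
    ring_nf
    linear_combination ((2) * (r ^ n) ^ 1 * r ^ 4 * c ^ 2 * s ^ 1 * pr ^ 1 * n ^ 1 * k2 ^ 1 + (-2) * (r ^ n) ^ 1 * r ^ 4 * c ^ 2 * s ^ 1 * pr ^ 1 * k2 ^ 1 + (16) * r ^ 5 * c ^ 2 * s ^ 2 * pr ^ 1 * n ^ 1 * k0 ^ 1 + (-16) * r ^ 5 * c ^ 2 * s ^ 2 * pr ^ 1 * k0 ^ 1 + (-2) * (r ^ n) ^ 1 * r ^ 3 * c ^ 3 * pφ ^ 1 * n ^ 1 * k2 ^ 1 + (2) * (r ^ n) ^ 1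 * r ^ 3 * c ^ 3 * pφ ^ 1 * k2 ^ 1 + (-16) * r ^ 4 * c ^ 3 * s ^ 1 * pφ ^ 1 * n ^ 1 * k0 ^ 1 + (16) * r ^ 4 * c ^ 3 * s ^ 1 * pφ ^ 1 * k0 ^ 1) * hs2
end

section
/- Let n ∈ ℝ, k_n = n − 1, and k₀, k₁, k₂ ∈ ℝ. Consider the Hamiltonian H_nb = T_n + (k₀/r^{2k_n})(cos²(k_n φ) + 4 sin²(k_n φ)) + r^{2k_n} k₁/cos²(k_n φ) + (k₂/r^{k_n}) sin(k_n φ), defined on the open subset of Ω = {r > 0} where cos(k_n φ) ≠ 0. Then the function J_b3 = P₁ p_φ − (k₀/r^{3k_n}) cos(k_n φ) sin(2k_n φ) + k₁ r^{k_n} sec³(k_n φ) sin(2k_n φ) − (k₂/(2 r^{2k_n})) cos²(k_n φ) is a constant of motion: {J_b3, H_nb} = 0 at every point of that open set. -/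
open Real

set_option maxHeartbeats 1600000 in
/-- J_b3 = P₁ p_φ − (k₀/r^(3k_n)) cos(k_n φ) sin(2k_n φ) + k₁ r^(k_n) sec³(k_n φ) sin(2k_n φ)
    − (k₂/(2r^(2k_n))) cos²(k_n φ) is a constant of motion of H_nb on the open subset of
Ω = {r > 0} where cos(k_n φ) ≠ 0. -/
theorem Hnb_Jb3_constant (n k0 k1 k2 : ℝ) :
    ∀ r φ pr pφ : ℝ, 0 < r → cos ((n-1)*φ) ≠ 0 →
      pb (fun r φ pr pφ => P1 n r φ pr pφ * pφ
            - (k0 / r ^ (3*(n-1))) * cos ((n-1)*φ) * sin (2*(n-1)*φ)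
            + k1 * r ^ (n-1) * (1 / cos ((n-1)*φ))^3 * sin (2*(n-1)*φ)
            - (k2 / (2 * r ^ (2*(n-1)))) * (cos ((n-1)*φ))^2)
         (Hnb n k0 k1 k2) r φ pr pφ = 0 := by
  intro r φ pr pφ hr hc
  have hrne : r ≠ 0 := hr.ne'
  have hp : ∀ a : ℝ, (0:ℝ) < r ^ a := fun a => Real.rpow_pos_of_pos hr a
  have hxn : HasDerivAt (fun x : ℝ => x ^ n) (n * r ^ (n-1)) r :=
    Real.hasDerivAt_rpow_const (Or.inl hrne)
  have hxk : HasDerivAt (fun x : ℝ => x ^ (n-1)) ((n-1) * r ^ (n-1-1)) r :=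
    Real.hasDerivAt_rpow_const (Or.inl hrne)
  have hx2n : HasDerivAt (fun x : ℝ => x ^ (2*n)) ((2*n) * r ^ (2*n-1)) r :=
    Real.hasDerivAt_rpow_const (Or.inl hrne)
  have hx2k : HasDerivAt (fun x : ℝ => x ^ (2*(n-1))) ((2*(n-1)) * r ^ (2*(n-1)-1)) r :=
    Real.hasDerivAt_rpow_const (Or.inl hrne)
  have hx3k : HasDerivAt (fun x : ℝ => x ^ (3*(n-1))) ((3*(n-1)) * r ^ (3*(n-1)-1)) r :=
    Real.hasDerivAt_rpow_const (Or.inl hrne)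
  -- φ-direction building blocks
  have hm : HasDerivAt (fun x : ℝ => (n-1)*x) ((n-1)*1) φ := (hasDerivAt_id φ).const_mul (n-1)
  have hm2 : HasDerivAt (fun x : ℝ => 2*(n-1)*x) ((2*(n-1))*1) φ := (hasDerivAt_id φ).const_mul (2*(n-1))
  have hcos := hm.cos
  have hsin := hm.sin
  have hsin2 := hm2.sin
  -- F partial derivatives
  have hFr := ((((hxn.mul ((hasDerivAt_const r (pr * cos ((n-1)*φ))).add
        (((hasDerivAt_const r pφ).div (hasDerivAt_id' r) hrne).mul_const (sin ((n-1)*φ))))).mul_const pφ).sub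
      ((((hasDerivAt_const r k0).div hx3k (hp _).ne').mul_const (cos ((n-1)*φ))).mul_const (sin (2*(n-1)*φ)))).add
      (((hxk.const_mul k1).mul_const ((1 / cos ((n-1)*φ))^3)).mul_const (sin (2*(n-1)*φ)))).sub
      (((hasDerivAt_const r k2).div ((hx2k.const_mul 2)) (by positivity)).mul_const ((cos ((n-1)*φ))^2))
  have hFpr := (((((hasDerivAt_id' pr).mul_const (cos ((n-1)*φ))).add_const ((pφ / r) * sin ((n-1)*φ))).const_mul
        (r ^ n)).mul_const pφ).sub_const ((k0 / r ^ (3*(n-1))) * cos ((n-1)*φ) * sin (2*(n-1)*φ))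
      |>.add_const (k1 * r ^ (n-1) * (1 / cos ((n-1)*φ))^3 * sin (2*(n-1)*φ))
      |>.sub_const ((k2 / (2 * r ^ (2*(n-1)))) * (cos ((n-1)*φ))^2)
  have hFpφ := (((((((hasDerivAt_id' pφ).div_const r).mul_const (sin ((n-1)*φ))).const_add
        (pr * cos ((n-1)*φ))).const_mul (r ^ n)).mul (hasDerivAt_id' pφ)).sub_const
        ((k0 / r ^ (3*(n-1))) * cos ((n-1)*φ) * sin (2*(n-1)*φ)))
      |>.add_const (k1 * r ^ (n-1) * (1 / cos ((n-1)*φ))^3 * sin (2*(n-1)*φ))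
      |>.sub_const ((k2 / (2 * r ^ (2*(n-1)))) * (cos ((n-1)*φ))^2)
  have hFφ := (((((hcos.const_mul pr).add (hsin.const_mul (pφ / r))).const_mul (r ^ n)).mul_const pφ).sub
        ((hcos.const_mul (k0 / r ^ (3*(n-1)))).mul hsin2)).add
        ((((((hasDerivAt_const φ 1).div hcos hc).pow 3).const_mul (k1 * r ^ (n-1))).mul hsin2))
      |>.sub ((hcos.pow 2).const_mul (k2 / (2 * r ^ (2*(n-1)))))
  -- G partial derivatives
  have hGr := ((((hx2n.const_mul (1/2)).mul
        (((hasDerivAt_const r (pφ^2)).div (hasDerivAt_pow 2 r) (pow_ne_zero 2 hrne)).const_add (pr^2))).add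
      (((hasDerivAt_const r k0).div hx2k (hp _).ne').mul_const
        ((cos ((n-1)*φ))^2 + 4 * (sin ((n-1)*φ))^2))).add
      ((hx2k.mul_const k1).div_const ((cos ((n-1)*φ))^2))).add
      (((hasDerivAt_const r k2).div hxk (hp _).ne').mul_const (sin ((n-1)*φ)))
  have hGpr := ((((hasDerivAt_pow 2 pr).add_const (pφ^2 / r^2)).const_mul ((1/2) * r ^ (2*n))).add_const
        ((k0 / r ^ (2*(n-1))) * ((cos ((n-1)*φ))^2 + 4 * (sin ((n-1)*φ))^2)))
      |>.add_const (r ^ (2*(n-1)) * k1 / (cos ((n-1)*φ))^2)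
      |>.add_const ((k2 / r ^ (n-1)) * sin ((n-1)*φ))
  have hGpφ := (((((hasDerivAt_pow 2 pφ).div_const (r^2)).const_add (pr^2)).const_mul ((1/2) * r ^ (2*n))).add_const
        ((k0 / r ^ (2*(n-1))) * ((cos ((n-1)*φ))^2 + 4 * (sin ((n-1)*φ))^2)))
      |>.add_const (r ^ (2*(n-1)) * k1 / (cos ((n-1)*φ))^2)
      |>.add_const ((k2 / r ^ (n-1)) * sin ((n-1)*φ))
  have hGφ := (((((hcos.pow 2).add ((hsin.pow 2).const_mul 4)).const_mul (k0 / r ^ (2*(n-1)))).const_add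
        ((1/2) * r ^ (2*n) * (pr^2 + pφ^2 / r^2))).add
      ((hasDerivAt_const φ (r ^ (2*(n-1)) * k1)).div (hcos.pow 2) (pow_ne_zero 2 hc))).add
      (hsin.const_mul (k2 / r ^ (n-1)))
  simp only [pb, P1, Hnb, Tkin]
  erw [hFr.deriv, hFpr.deriv, hFpφ.deriv, hFφ.deriv, hGr.deriv, hGpr.deriv, hGpφ.deriv, hGφ.deriv]
  have e1 : r ^ n = r ^ (n-1) * r := by
    nth_rewrite 1 [show n = (n-1)+1 by ring]
    rw [Real.rpow_add hr, Real.rpow_one]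
  have e2 : r ^ (n-1-1) = r ^ (n-1) / r := by
    rw [show n-1-1 = (n-1)-1 by ring, Real.rpow_sub hr, Real.rpow_one]
  have e3 : r ^ (2*n) = r ^ (n-1) * r ^ (n-1) * (r*r) := by
    rw [show 2*n = (n-1)+((n-1)+(1+1)) by ring, Real.rpow_add hr, Real.rpow_add hr,
      Real.rpow_add hr, Real.rpow_one]
    ring
  have e4 : r ^ (2*n-1) = r ^ (n-1) * r ^ (n-1) * r := by
    rw [show 2*n-1 = (n-1)+((n-1)+1) by ring, Real.rpow_add hr, Real.rpow_add hr, Real.rpow_one]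
    ring
  have e5 : r ^ (2*(n-1)) = r ^ (n-1) * r ^ (n-1) := by
    rw [show 2*(n-1) = (n-1)+(n-1) by ring, Real.rpow_add hr]
  have e6 : r ^ (2*(n-1)-1) = r ^ (n-1) * r ^ (n-1) / r := by
    rw [show 2*(n-1)-1 = ((n-1)+(n-1))-1 by ring, Real.rpow_sub hr, Real.rpow_add hr, Real.rpow_one]
  have e7 : r ^ (3*(n-1)) = r ^ (n-1) * r ^ (n-1) * r ^ (n-1) := by
    rw [show 3*(n-1) = (n-1)+((n-1)+(n-1)) by ring, Real.rpow_add hr, Real.rpow_add hr]; ring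
  have e8 : r ^ (3*(n-1)-1) = r ^ (n-1) * r ^ (n-1) * r ^ (n-1) / r := by
    rw [show 3*(n-1)-1 = ((n-1)+((n-1)+(n-1)))-1 by ring, Real.rpow_sub hr, Real.rpow_add hr,
      Real.rpow_add hr, Real.rpow_one]
    ring
  rw [show 2*(n-1)*φ = 2*((n-1)*φ) by ring, Real.sin_two_mul, Real.cos_two_mul']
  rw [e8, e7, e6, e5, e4, e3, e2, e1]
  have hs : r ^ (n-1) ≠ 0 := (hp _).ne'
  norm_num
  field_simp
  ring
end

section
/- Let n ∈ ℝ, n ≠ 1, k_n = n − 1, and k₀ ∈ ℝ. Consider the Kepler-type Hamiltonian H_nc = T_n + k₀ r^{n−1} on Ω = {r > 0}. Then the three functions J₁ = p_φ, J₂ = P₂ p_φ − k₀ cos(k_n φ) and J₃ = P₁ p_φ + k₀ sin(k_n φ) are constants of motion: {J₁, H_nc} = 0, {J₂, H_nc} = 0 and {J₃, H_nc} = 0 at every point of Ω. (J₂ and J₃ are the two components of a Laplace–Runge–Lenz-type vector for the position-dependent mass m_n = 1/r^{2n}.) -/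
open Real

/-- The Kepler-type Hamiltonian H_nc = T_n + k₀ r^(n−1). -/
noncomputable def Hnc (n k0 : ℝ) (r φ pr pφ : ℝ) : ℝ :=
  Tkin n r φ pr pφ + k0 * r ^ (n-1)

/-- J₁ = p_φ and the Runge–Lenz-type functions J₂ = P₂ p_φ − k₀ cos(k_n φ),
J₃ = P₁ p_φ + k₀ sin(k_n φ) are constants of motion of H_nc on Ω = {r > 0}. -/
theorem Hnc_superintegrable (n k0 : ℝ) (hn : n ≠ 1) :
    ∀ r φ pr pφ : ℝ, 0 < r →
      pb (fun _ _ _ p => p) (Hnc n k0) r φ pr pφ = 0 ∧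
      pb (fun r φ pr pφ => P2 n r φ pr pφ * pφ - k0 * cos ((n-1)*φ))
         (Hnc n k0) r φ pr pφ = 0 ∧
      pb (fun r φ pr pφ => P1 n r φ pr pφ * pφ + k0 * sin ((n-1)*φ))
         (Hnc n k0) r φ pr pφ = 0 := by
  intro r φ pr pφ hr
  have hr0 : r ≠ 0 := hr.ne'
  set s : ℝ := sin ((n-1)*φ) with hs
  set c : ℝ := cos ((n-1)*φ) with hc
  -- derivatives of the Hamiltonian
  have dHr : deriv (fun x => Hnc n k0 x φ pr pφ) r =
      (1/2) * (2*n * r^(2*n-1)) * (pr^2 + pφ^2/r^2)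
        + (1/2)*r^(2*n) * ((0*r^2 - pφ^2*(2*r))/(r^2)^2)
        + k0 * ((n-1) * r^(n-1-1)) := by
    have h1 : HasDerivAt (fun x : ℝ => x ^ (2*n)) (2*n * r^(2*n-1)) r :=
      Real.hasDerivAt_rpow_const (Or.inl hr0)
    have h2 : HasDerivAt (fun x : ℝ => pφ^2 / x^2) ((0*r^2 - pφ^2*(2*r))/(r^2)^2) r := by
      have := (hasDerivAt_const r (pφ^2)).div (by simpa using hasDerivAt_pow 2 r : HasDerivAt (fun x : ℝ => x^2) (2*r) r)
        (pow_ne_zero 2 hr0)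
      exact this
    have h3 : HasDerivAt (fun x : ℝ => k0 * x ^ (n-1)) (k0 * ((n-1) * r^(n-1-1))) r :=
      (Real.hasDerivAt_rpow_const (Or.inl hr0)).const_mul k0
    exact ((((h1.const_mul (1/2:ℝ)).mul (h2.const_add (pr^2))).add h3)).deriv
  have dHpr : deriv (fun x => Hnc n k0 r φ x pφ) pr = (1/2) * r^(2*n) * (2*pr) := by
    have h1 : HasDerivAt (fun x : ℝ => x^2) (2*pr) pr := by simpa using hasDerivAt_pow 2 pr
    exact (((h1.add_const (pφ^2/r^2)).const_mul ((1/2)*r^(2*n))).add_const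
      (k0 * r^(n-1))).deriv
  have dHpφ : deriv (fun x => Hnc n k0 r φ pr x) pφ = (1/2) * r^(2*n) * (2*pφ/r^2) := by
    have h1 : HasDerivAt (fun x : ℝ => x^2/r^2) (2*pφ/r^2) pφ := by
      simpa using (hasDerivAt_pow 2 pφ).div_const (r^2)
    exact (((h1.const_add (pr^2)).const_mul ((1/2)*r^(2*n))).add_const (k0 * r^(n-1))).deriv
  have dHφ : deriv (fun x => Hnc n k0 r x pr pφ) φ = 0 := by
    unfold Hnc Tkin; exact deriv_const φ _
  -- building blocks
  have hlin : HasDerivAt (fun x : ℝ => (n-1)*x) (n-1) φ := by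
    simpa using (hasDerivAt_id φ).const_mul (n-1)
  have hsin : HasDerivAt (fun x : ℝ => sin ((n-1)*x)) (c * (n-1)) φ := by
    exact (Real.hasDerivAt_sin ((n-1)*φ)).comp φ hlin
  have hcos : HasDerivAt (fun x : ℝ => cos ((n-1)*x)) (-s * (n-1)) φ := by
    exact (Real.hasDerivAt_cos ((n-1)*φ)).comp φ hlin
  have hdivr : HasDerivAt (fun x : ℝ => pφ / x) ((0*r - pφ*1)/r^2) r :=
    (hasDerivAt_const r pφ).div (hasDerivAt_id r) hr0
  have hrn : HasDerivAt (fun x : ℝ => x ^ n) (n * r^(n-1)) r :=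
    Real.hasDerivAt_rpow_const (Or.inl hr0)
  have e2n : r ^ (2*n) = r^n * r^n := by rw [two_mul, Real.rpow_add hr]
  have e2n1 : r ^ (2*n-1) = r^n * r^n / r := by
    rw [Real.rpow_sub hr, e2n, Real.rpow_one]
  have en1 : r ^ (n-1) = r^n / r := by rw [Real.rpow_sub hr, Real.rpow_one]
  have en2 : r ^ (n-1-1) = r^n / r / r := by
    rw [Real.rpow_sub hr, Real.rpow_sub hr, Real.rpow_one]
  refine ⟨?_, ?_, ?_⟩
  · unfold pb
    rw [dHφ]
    simp
  · -- J₂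
    have dFr : deriv (fun x => P2 n x φ pr pφ * pφ - k0 * c) r =
        (n * r^(n-1) * (pr*s - pφ/r*c) + r^n * -((0*r - pφ*1)/r^2*c)) * pφ := by
      have h := ((hrn.mul ((hdivr.mul_const c).const_sub (pr*s))).mul_const pφ).sub_const
        (k0 * c)
      unfold P2
      exact h.deriv
    have dFpr : deriv (fun x => P2 n r φ x pφ * pφ - k0 * c) pr =
        r^n * (1*s) * pφ := by
      have h := (((((hasDerivAt_id pr).mul_const s).sub_const ((pφ/r)*c)).const_mul
        (r^n)).mul_const pφ).sub_const (k0 * c)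
      unfold P2
      exact h.deriv
    have dFφ : deriv (fun x => P2 n r x pr pφ * pφ - k0 * cos ((n-1)*x)) φ =
        r^n * (pr*(c*(n-1)) - pφ/r*(-s*(n-1))) * pφ - k0 * (-s*(n-1)) := by
      have h := ((((hsin.const_mul pr).sub (hcos.const_mul (pφ/r))).const_mul
        (r^n)).mul_const pφ).sub (hcos.const_mul k0)
      unfold P2
      exact h.deriv
    have dFpφ : deriv (fun x => P2 n r φ pr x * x - k0 * c) pφ =
        r^n * -(1/r*c) * pφ + r^n * (pr*s - pφ/r*c) * 1 := by
      have h := ((((((hasDerivAt_id pφ).div_const r).mul_const c).const_sub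
        (pr*s)).const_mul (r^n)).mul (hasDerivAt_id pφ)).sub_const (k0 * c)
      unfold P2
      exact h.deriv
    unfold pb
    rw [dFr, dFpr, dFφ, dFpφ, dHr, dHpr, dHpφ, dHφ, e2n, e2n1, en1, en2]
    field_simp
    ring
  · -- J₃
    have dFr : deriv (fun x => P1 n x φ pr pφ * pφ + k0 * s) r =
        (n * r^(n-1) * (pr*c + pφ/r*s) + r^n * ((0*r - pφ*1)/r^2*s)) * pφ := by
      have h := ((hrn.mul ((hdivr.mul_const s).const_add (pr*c))).mul_const pφ).add_const
        (k0 * s)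
      unfold P1
      exact h.deriv
    have dFpr : deriv (fun x => P1 n r φ x pφ * pφ + k0 * s) pr =
        r^n * (1*c) * pφ := by
      have h := (((((hasDerivAt_id pr).mul_const c).add_const ((pφ/r)*s)).const_mul
        (r^n)).mul_const pφ).add_const (k0 * s)
      unfold P1
      exact h.deriv
    have dFφ : deriv (fun x => P1 n r x pr pφ * pφ + k0 * sin ((n-1)*x)) φ =
        r^n * (pr*(-s*(n-1)) + pφ/r*(c*(n-1))) * pφ + k0 * (c*(n-1)) := by
      have h := ((((hcos.const_mul pr).add (hsin.const_mul (pφ/r))).const_mul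
        (r^n)).mul_const pφ).add (hsin.const_mul k0)
      unfold P1
      exact h.deriv
    have dFpφ : deriv (fun x => P1 n r φ pr x * x + k0 * s) pφ =
        r^n * (1/r*s) * pφ + r^n * (pr*c + pφ/r*s) * 1 := by
      have h := ((((((hasDerivAt_id pφ).div_const r).mul_const s).const_add
        (pr*c)).const_mul (r^n)).mul (hasDerivAt_id pφ)).add_const (k0 * s)
      unfold P1
      exact h.deriv
    unfold pb
    rw [dFr, dFpr, dFφ, dFpφ, dHr, dHpr, dHpφ, dHφ, e2n, e2n1, en1, en2]
    field_simp
    ring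
end

section
/- Let n ∈ ℝ, k_n = n − 1, and k₀, k₁, k₂ ∈ ℝ. Consider the Hamiltonian H_nc1 = T_n + k₀ r^{n−1} + r^{2k_n}[k₁/sin²(k_n φ) + k₂ cos(k_n φ)/sin²(k_n φ)], defined on the open subset of Ω = {r > 0} where sin(k_n φ) ≠ 0. Then the two functions J_c2 = p_φ² + 2[k₁/sin²(k_n φ) + k₂ cos(k_n φ)/sin²(k_n φ)] and J_c3 = P₂ p_φ − k₀ cos(k_n φ) − 2k₁ r^{k_n} csc(k_n φ) cot(k_n φ) − k₂ r^{k_n}(csc²(k_n φ) + cot²(k_n φ)) are constants of motion: {J_c2, H_nc1} = 0 and {J_c3, H_nc1} = 0 at every point of that open set. -/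
open Real

/-- The Hamiltonian H_nc1 = T_n + k₀ r^(n−1)
      + r^(2k_n)[k₁/sin²(k_n φ) + k₂ cos(k_n φ)/sin²(k_n φ)]. -/
noncomputable def Hnc1 (n k0 k1 k2 : ℝ) (r φ pr pφ : ℝ) : ℝ :=
  Tkin n r φ pr pφ + k0 * r ^ (n-1)
    + r ^ (2*(n-1)) * (k1 / (sin ((n-1)*φ))^2 + k2 * cos ((n-1)*φ) / (sin ((n-1)*φ))^2)

/-- J_c2 and J_c3 are constants of motion of H_nc1 on the open subset of
Ω = {r > 0} where sin(k_n φ) ≠ 0. -/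
theorem Hnc1_superintegrable (n k0 k1 k2 : ℝ) :
    ∀ r φ pr pφ : ℝ, 0 < r → sin ((n-1)*φ) ≠ 0 →
      pb (fun _ φ _ pφ => pφ^2
            + 2 * (k1 / (sin ((n-1)*φ))^2 + k2 * cos ((n-1)*φ) / (sin ((n-1)*φ))^2))
         (Hnc1 n k0 k1 k2) r φ pr pφ = 0 ∧
      pb (fun r φ pr pφ => P2 n r φ pr pφ * pφ - k0 * cos ((n-1)*φ)
            - 2 * k1 * r ^ (n-1) * ((1 / sin ((n-1)*φ)) * (cos ((n-1)*φ) / sin ((n-1)*φ)))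
            - k2 * r ^ (n-1) * ((1 / sin ((n-1)*φ))^2 + (cos ((n-1)*φ) / sin ((n-1)*φ))^2))
         (Hnc1 n k0 k1 k2) r φ pr pφ = 0 := by
  intro r φ pr pφ hr hs
  have hrne : r ≠ 0 := hr.ne'
  set s := sin ((n-1)*φ) with hsdef
  set c := cos ((n-1)*φ) with hcdef
  -- trig derivative bricks
  have hid : HasDerivAt (fun x : ℝ => (n-1)*x) (n-1) φ := by
    simpa using (hasDerivAt_id φ).const_mul (n-1)
  have hsin : HasDerivAt (fun x : ℝ => sin ((n-1)*x)) (c * (n-1)) φ :=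
    (Real.hasDerivAt_sin _).comp φ hid
  have hcos : HasDerivAt (fun x : ℝ => cos ((n-1)*x)) (-s * (n-1)) φ :=
    (Real.hasDerivAt_cos _).comp φ hid
  have hsin2 : HasDerivAt (fun x : ℝ => sin ((n-1)*x)^2) (2 * s * (c * (n-1))) φ := by
    simpa [Pi.pow_def] using hsin.pow 2
  have hs2 : s^2 ≠ 0 := pow_ne_zero _ hs
  -- derivative of the angular potential
  have hU : HasDerivAt (fun x : ℝ => k1 / sin ((n-1)*x)^2 + k2 * cos ((n-1)*x) / sin ((n-1)*x)^2)
      (-((n-1) * (2*k1*c*s + k2*s^3 + 2*k2*c^2*s)) / (s^2)^2) φ :=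
    (((hasDerivAt_const φ k1).div hsin2 hs2).add
      ((hcos.const_mul k2).div hsin2 hs2)).congr_deriv (by ring)
  -- partial derivatives of the Hamiltonian
  have hH_pφ : HasDerivAt (fun x : ℝ => Hnc1 n k0 k1 k2 r φ pr x)
      (1/2 * r^(2*n) * (2 * pφ^1 / r^2)) pφ := by
    unfold Hnc1 Tkin
    exact ((((hasDerivAt_pow 2 pφ).div_const (r^2)).const_add (pr^2)).const_mul
      (1/2 * r^(2*n))).add_const _ |>.add_const _ |>.congr_deriv (by push_cast; ring)
  have hH_φ : HasDerivAt (fun x : ℝ => Hnc1 n k0 k1 k2 r x pr pφ)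
      (r^(2*(n-1)) * (-((n-1) * (2*k1*c*s + k2*s^3 + 2*k2*c^2*s)) / (s^2)^2)) φ := by
    unfold Hnc1 Tkin
    exact ((hU.const_mul (r^(2*(n-1)))).const_add _).congr_deriv (by ring)
  have hH_pr : HasDerivAt (fun x : ℝ => Hnc1 n k0 k1 k2 r φ x pφ)
      (r^(2*n) * pr) pr := by
    unfold Hnc1 Tkin
    exact ((((hasDerivAt_pow 2 pr).add_const _).const_mul
      (1/2 * r^(2*n))).add_const _).add_const _ |>.congr_deriv (by push_cast; ring)
  have hH_r : HasDerivAt (fun x : ℝ => Hnc1 n k0 k1 k2 x φ pr pφ)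
      (n * r^(2*n-1) * (pr^2 + pφ^2/r^2) + 1/2 * r^(2*n) * (-(2*pφ^2*r)/(r^2)^2)
        + k0*((n-1)*r^(n-1-1)) + 2*(n-1)*r^(2*(n-1)-1) * (k1/s^2 + k2*c/s^2)) r := by
    unfold Hnc1 Tkin
    rw [← hsdef, ← hcdef]
    have h2n : HasDerivAt (fun x : ℝ => x^(2*n)) (2*n * r^(2*n-1)) r :=
      Real.hasDerivAt_rpow_const (Or.inl hrne)
    have hk' : HasDerivAt (fun x : ℝ => x^(n-1)) ((n-1) * r^(n-1-1)) r :=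
      Real.hasDerivAt_rpow_const (Or.inl hrne)
    have h2k : HasDerivAt (fun x : ℝ => x^(2*(n-1))) (2*(n-1) * r^(2*(n-1)-1)) r :=
      Real.hasDerivAt_rpow_const (Or.inl hrne)
    exact (((h2n.const_mul (1/2)).mul
      (((hasDerivAt_const r (pφ^2)).div (hasDerivAt_pow 2 r) (pow_ne_zero 2 hrne)).const_add
        (pr^2))).add (hk'.const_mul k0)).add
      (h2k.mul_const (k1/s^2 + k2*c/s^2)) |>.congr_deriv (by push_cast; simp only [Pi.div_apply]; ring)
  constructor
  · -- first constant of motion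
    have hF_φ : HasDerivAt (fun x : ℝ => pφ^2
        + 2 * (k1 / sin ((n-1)*x)^2 + k2 * cos ((n-1)*x) / sin ((n-1)*x)^2))
        (2 * (-((n-1) * (2*k1*c*s + k2*s^3 + 2*k2*c^2*s)) / (s^2)^2)) φ :=
      (hU.const_mul 2).const_add _
    have hF_pφ : HasDerivAt (fun x : ℝ => x^2 + 2 * (k1 / s^2 + k2 * c / s^2)) (2 * pφ) pφ := by
      simpa using (hasDerivAt_pow 2 pφ).add_const (2 * (k1 / s^2 + k2 * c / s^2))
    have hpow : r ^ (2*n) = r ^ (2*(n-1)) * r^2 := by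
      rw [show (2*n) = 2*(n-1) + 2 by ring, Real.rpow_add hr]
      norm_num [Real.rpow_natCast]
    simp only [pb]
    rw [hF_φ.deriv, hF_pφ.deriv, hH_φ.deriv, hH_pφ.deriv]
    simp only [deriv_const']
    rw [hpow]
    field_simp
    ring
  · -- second constant of motion
    have hxn : HasDerivAt (fun x : ℝ => x^n) (n * r^(n-1)) r :=
      Real.hasDerivAt_rpow_const (Or.inl hrne)
    have hxk : HasDerivAt (fun x : ℝ => x^(n-1)) ((n-1) * r^(n-1-1)) r :=
      Real.hasDerivAt_rpow_const (Or.inl hrne)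
    have hG_r : HasDerivAt (fun x : ℝ => P2 n x φ pr pφ * pφ - k0 * c
        - 2 * k1 * x ^ (n-1) * (1 / s * (c / s))
        - k2 * x ^ (n-1) * ((1 / s) ^ 2 + (c / s) ^ 2))
        ((n * r^(n-1) * (pr*s - pφ/r*c) + r^n * (pφ*c/r^2)) * pφ
          - 2*k1*((n-1)*r^(n-1-1))*(c/s^2) - k2*((n-1)*r^(n-1-1))*((1+c^2)/s^2)) r := by
      unfold P2
      rw [← hsdef, ← hcdef]
      have hq : HasDerivAt (fun x : ℝ => pφ / x) ((0 * r - pφ * 1)/r^2) r :=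
        (hasDerivAt_const r pφ).div (hasDerivAt_id r) hrne
      exact ((((hxn.mul ((hq.mul_const c).const_sub (pr*s))).mul_const pφ).sub_const
        (k0*c)).sub ((hxk.const_mul (2*k1)).mul_const (1 / s * (c / s)))).sub
        ((hxk.const_mul k2).mul_const ((1/s)^2 + (c/s)^2)) |>.congr_deriv (by ring)
    have hG_pr : HasDerivAt (fun x : ℝ => P2 n r φ x pφ * pφ - k0 * c
        - 2 * k1 * r ^ (n-1) * (1 / s * (c / s))
        - k2 * r ^ (n-1) * ((1 / s) ^ 2 + (c / s) ^ 2))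
        (r^n * s * pφ) pr := by
      unfold P2
      rw [← hsdef, ← hcdef]
      exact (((((((hasDerivAt_id pr).mul_const s).sub_const (pφ/r*c)).const_mul
        (r^n)).mul_const pφ).sub_const _).sub_const _).sub_const _ |>.congr_deriv (by ring)
    have hG_pφ : HasDerivAt (fun x : ℝ => P2 n r φ pr x * x - k0 * c
        - 2 * k1 * r ^ (n-1) * (1 / s * (c / s))
        - k2 * r ^ (n-1) * ((1 / s) ^ 2 + (c / s) ^ 2))
        (r^n * (-(c/r)) * pφ + r^n * (pr*s - pφ/r*c)) pφ := by
      unfold P2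
      rw [← hsdef, ← hcdef]
      exact ((((((((hasDerivAt_id pφ).div_const r).mul_const c).const_sub (pr*s)).const_mul
        (r^n)).mul (hasDerivAt_id pφ)).sub_const _).sub_const _).sub_const _
        |>.congr_deriv (by simp only [id_eq]; ring)
    have hG_φ : HasDerivAt (fun x : ℝ => P2 n r x pr pφ * pφ - k0 * cos ((n-1)*x)
        - 2 * k1 * r ^ (n-1) * (1 / sin ((n-1)*x) * (cos ((n-1)*x) / sin ((n-1)*x)))
        - k2 * r ^ (n-1) * ((1 / sin ((n-1)*x)) ^ 2 + (cos ((n-1)*x) / sin ((n-1)*x)) ^ 2))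
        ((n-1) * (r^n * (pr*c + pφ/r*s) * pφ + k0*s)
          + 2*k1*r^(n-1)*(n-1)*(s^2+2*c^2)/s^3
          + 2*k2*r^(n-1)*(n-1)*c*(s^2+1+c^2)/s^3) φ := by
      unfold P2
      have h1s : HasDerivAt (fun x : ℝ => 1 / sin ((n-1)*x))
          ((0 * s - 1 * (c * (n-1))) / s^2) φ := (hasDerivAt_const φ 1).div hsin hs
      have hcs : HasDerivAt (fun x : ℝ => cos ((n-1)*x) / sin ((n-1)*x))
          ((-s * (n-1) * s - c * (c * (n-1))) / s^2) φ := hcos.div hsin hs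
      exact (((((hsin.const_mul pr).sub (hcos.const_mul (pφ/r))).const_mul
        (r^n)).mul_const pφ).sub (hcos.const_mul k0)).sub
        ((h1s.mul hcs).const_mul (2*k1*r^(n-1))) |>.sub
        (((h1s.pow 2).add (hcs.pow 2)).const_mul (k2*r^(n-1)))
        |>.congr_deriv (by push_cast; ring)
    simp only [pb]
    rw [hG_r.deriv, hG_pr.deriv, hG_pφ.deriv, hG_φ.deriv,
      hH_r.deriv, hH_pr.deriv, hH_pφ.deriv, hH_φ.deriv]
    have hA1 : r ^ n = r ^ (n-1) * r := by
      conv_lhs => rw [show n = (n-1) + 1 by ring]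
      rw [Real.rpow_add hr, Real.rpow_one]
    have hA2 : r ^ (n-1-1) = r ^ (n-1) * r⁻¹ := by
      conv_lhs => rw [show n-1-1 = (n-1) + (-1 : ℝ) by ring]
      rw [Real.rpow_add hr, Real.rpow_neg_one]
    have hA3 : r ^ (2*n) = r ^ (n-1) * (r ^ (n-1) * (r * r)) := by
      conv_lhs => rw [show 2*n = (n-1) + ((n-1) + (1 + 1)) by ring]
      rw [Real.rpow_add hr, Real.rpow_add hr, Real.rpow_add hr, Real.rpow_one]
    have hA4 : r ^ (2*n-1) = r ^ (n-1) * (r ^ (n-1) * r) := by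
      conv_lhs => rw [show 2*n-1 = (n-1) + ((n-1) + 1) by ring]
      rw [Real.rpow_add hr, Real.rpow_add hr, Real.rpow_one]
    have hA5 : r ^ (2*(n-1)) = r ^ (n-1) * r ^ (n-1) := by
      conv_lhs => rw [show 2*(n-1) = (n-1) + (n-1) by ring]
      rw [Real.rpow_add hr]
    have hA6 : r ^ (2*(n-1)-1) = r ^ (n-1) * (r ^ (n-1) * r⁻¹) := by
      conv_lhs => rw [show 2*(n-1)-1 = (n-1) + ((n-1) + (-1 : ℝ)) by ring]
      rw [Real.rpow_add hr, Real.rpow_add hr, Real.rpow_neg_one]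
    rw [hA3, hA4, hA6, hA5, hA2, hA1]
    set A := r ^ (n-1) with hAdef
    have pyth : s^2 + c^2 = 1 := by rw [hsdef, hcdef]; exact sin_sq_add_cos_sq _
    have hsinv : s * s⁻¹ = 1 := mul_inv_cancel₀ hs
    have hrinv : r * r⁻¹ = 1 := mul_inv_cancel₀ hrne
    linear_combination (2*k2*pφ*A^3*s⁻¹^3*c + (-1)*k2*pr*A^3*r*s⁻¹^2 + (-2)*n*k2*pφ*A^3*s⁻¹^3*c + 1*n*k2*pr*A^3*r*s⁻¹^2) * pyth + (4*k2*pφ*A^3*s⁻¹^3*c^3 + (-2)*k2*pφ*A^3*s*s⁻¹^2*c + 2*k2*pφ*A^3*s^2*s⁻¹^3*c + (-2)*k2*pr*A^3*r*s⁻¹^2*c^2 + (-2)*k2*pr*A^3*r*s*s⁻¹^3*c^2 + (-1)*k2*pr*A^3*r*s^2*s⁻¹^2 + (-1)*k2*pr*A^3*r*s^3*s⁻¹^3 + 4*k1*pφ*A^3*s⁻¹^3*c^2 + (-2)*k1*pφ*A^3*s*s⁻¹^2 + (-2)*k1*pr*A^3*r*s⁻¹^2*c + (-2)*k1*pr*A^3*r*s*s⁻¹^3*c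 + (-4)*n*k2*pφ*A^3*s⁻¹^3*c^3 + 2*n*k2*pφ*A^3*s*s⁻¹^2*c + (-2)*n*k2*pφ*A^3*s^2*s⁻¹^3*c + 2*n*k2*pr*A^3*r*s⁻¹^2*c^2 + 2*n*k2*pr*A^3*r*s*s⁻¹^3*c^2 + 1*n*k2*pr*A^3*r*s^2*s⁻¹^2 + 1*n*k2*pr*A^3*r*s^3*s⁻¹^3 + (-4)*n*k1*pφ*A^3*s⁻¹^3*c^2 + 2*n*k1*pφ*A^3*s*s⁻¹^2 + 2*n*k1*pr*A^3*r*s⁻¹^2*c + 2*n*k1*pr*A^3*r*s*s⁻¹^3*c) * hsinv + (1*pφ^3*A^3*r^3*r⁻¹^3*s + (-2)*k2*pφ*A^3*s⁻¹^3*c + (-2)*k2*pφ*A^3*s⁻¹^3*c^3 + 2*k2*pφ*A^3*s*s⁻¹^2*c + 4*k2*pφ*A^3*s*s⁻¹^4*c^3 + (-2)*k2*pφ*A^3*s^2*s⁻¹^3*c + 2*k2*pφ*A^3*s^3*s⁻¹^4*c + (-2)*k2*pφ*A^3*r*r⁻¹*s⁻¹^3*c + (-2)*k2*pφ*A^3*r*r⁻¹*s⁻¹^3*c^3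 + (-2)*k2*pφ*A^3*r*r⁻¹*s^2*s⁻¹^3*c + 1*k2*pr*A^3*r*s⁻¹^2 + 1*k2*pr*A^3*r*s⁻¹^2*c^2 + (-4)*k1*pφ*A^3*s⁻¹^3*c^2 + 2*k1*pφ*A^3*s*s⁻¹^2 + 4*k1*pφ*A^3*s*s⁻¹^4*c^2 + (-2)*k1*pφ*A^3*s^2*s⁻¹^3 + (-4)*k1*pφ*A^3*r*r⁻¹*s⁻¹^3*c^2 + (-2)*k1*pφ*A^3*r*r⁻¹*s^2*s⁻¹^3 + 2*k1*pr*A^3*r*s⁻¹^2*c + (-1)*k0*pφ*A^2*r*r⁻¹*s + 1*n*pφ^3*A^3*r^2*r⁻¹^2*s + 1*n*pr*pφ^2*A^3*r^2*r⁻¹*c + 2*n*k2*pφ*A^3*s⁻¹^3*c + 2*n*k2*pφ*A^3*s⁻¹^3*c^3 + (-2)*n*k2*pφ*A^3*s*s⁻¹^2*c + (-4)*n*k2*pφ*A^3*s*s⁻¹^4*c^3 + 2*n*k2*pφ*A^3*s^2*s⁻¹^3*c + (-2)*n*k2*pφ*A^3*s^3*s⁻¹^4*c + 2*n*k2*pφ*A^3*r*r⁻¹*s⁻¹^3*c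 + 2*n*k2*pφ*A^3*r*r⁻¹*s⁻¹^3*c^3 + 2*n*k2*pφ*A^3*r*r⁻¹*s^2*s⁻¹^3*c + (-1)*n*k2*pr*A^3*r*s⁻¹^2 + (-1)*n*k2*pr*A^3*r*s⁻¹^2*c^2 + 4*n*k1*pφ*A^3*s⁻¹^3*c^2 + (-2)*n*k1*pφ*A^3*s*s⁻¹^2 + (-4)*n*k1*pφ*A^3*s*s⁻¹^4*c^2 + 2*n*k1*pφ*A^3*s^2*s⁻¹^3 + 4*n*k1*pφ*A^3*r*r⁻¹*s⁻¹^3*c^2 + 2*n*k1*pφ*A^3*r*r⁻¹*s^2*s⁻¹^3 + (-2)*n*k1*pr*A^3*r*s⁻¹^2*c + 1*n*k0*pφ*A^2*r*r⁻¹*s) * hrinv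
end

section
/- Let n ∈ ℝ, k_n = n − 1, and k₀, k₁, k₂ ∈ ℝ. Consider the Hamiltonian H_nc2 = T_n + k₀ r^{n−1} + r^{2k_n}[k₁/cos²(k_n φ) + k₂ sin(k_n φ)/cos²(k_n φ)], defined on the open subset of Ω = {r > 0} where cos(k_n φ) ≠ 0. Then the two functions J_c2 = p_φ² + 2[k₁/cos²(k_n φ) + k₂ sin(k_n φ)/cos²(k_n φ)] and J_c3 = P₁ p_φ + k₀ sin(k_n φ) + 2k₁ r^{k_n} sec(k_n φ) tan(k_n φ) + k₂ r^{k_n}(sec²(k_n φ) + tan²(k_n φ)) are constants of motion: {J_c2, H_nc2} = 0 and {J_c3, H_nc2} = 0 at every point of that open set. -/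
open Real

/-- The Hamiltonian H_nc2 = T_n + k₀ r^(n−1)
      + r^(2k_n)[k₁/cos²(k_n φ) + k₂ sin(k_n φ)/cos²(k_n φ)]. -/
noncomputable def Hnc2 (n k0 k1 k2 : ℝ) (r φ pr pφ : ℝ) : ℝ :=
  Tkin n r φ pr pφ + k0 * r ^ (n-1)
    + r ^ (2*(n-1)) * (k1 / (cos ((n-1)*φ))^2 + k2 * sin ((n-1)*φ) / (cos ((n-1)*φ))^2)

set_option maxHeartbeats 1000000 in
/-- J_c2 and J_c3 are constants of motion of H_nc2 on the open subset of
Ω = {r > 0} where cos(k_n φ) ≠ 0. -/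
theorem Hnc2_superintegrable (n k0 k1 k2 : ℝ) :
    ∀ r φ pr pφ : ℝ, 0 < r → cos ((n-1)*φ) ≠ 0 →
      pb (fun _ φ _ pφ => pφ^2
            + 2 * (k1 / (cos ((n-1)*φ))^2 + k2 * sin ((n-1)*φ) / (cos ((n-1)*φ))^2))
         (Hnc2 n k0 k1 k2) r φ pr pφ = 0 ∧
      pb (fun r φ pr pφ => P1 n r φ pr pφ * pφ + k0 * sin ((n-1)*φ)
            + 2 * k1 * r ^ (n-1) * ((1 / cos ((n-1)*φ)) * (sin ((n-1)*φ) / cos ((n-1)*φ)))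
            + k2 * r ^ (n-1) * ((1 / cos ((n-1)*φ))^2 + (sin ((n-1)*φ) / cos ((n-1)*φ))^2))
         (Hnc2 n k0 k1 k2) r φ pr pφ = 0 := by
  intro r φ pr pφ hr hc
  have hr' : r ≠ 0 := hr.ne'
  -- rpow arithmetic
  have e1 : (r ^ n) ^ 2 = r ^ (2*n) := by rw [sq, ← Real.rpow_add hr]; ring_nf
  have e2 : r ^ (n-1) = r ^ n / r := by rw [Real.rpow_sub hr, Real.rpow_one]
  have e3 : r ^ (2*n-1) = (r ^ n) ^ 2 / r := by rw [Real.rpow_sub hr, Real.rpow_one, e1]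
  have e5 : r ^ (n-1-1) = r ^ n / r / r := by rw [Real.rpow_sub hr, Real.rpow_one, e2]
  have e4 : r ^ (2*(n-1)) = (r ^ n) ^ 2 / r / r := by
    rw [show 2*(n-1) = 2*n - 1 - 1 by ring, Real.rpow_sub hr, Real.rpow_one, e3]
  have e6 : r ^ (2*(n-1)-1) = (r ^ n) ^ 2 / r / r / r := by
    rw [show 2*(n-1)-1 = 2*n - 1 - 1 - 1 by ring, Real.rpow_sub hr, Real.rpow_one,
      Real.rpow_sub hr, Real.rpow_one, e3]
  -- basic trig derivatives
  have hid : HasDerivAt (fun x : ℝ => (n-1)*x) (n-1) φ := by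
    simpa using (hasDerivAt_id φ).const_mul (n-1)
  have hcos : HasDerivAt (fun x => cos ((n-1)*x)) (-sin ((n-1)*φ) * (n-1)) φ := by
    exact (Real.hasDerivAt_cos ((n-1)*φ)).comp φ hid
  have hsin : HasDerivAt (fun x => sin ((n-1)*x)) (cos ((n-1)*φ) * (n-1)) φ := by
    exact (Real.hasDerivAt_sin ((n-1)*φ)).comp φ hid
  -- derivative of the angular potential
  have hU : HasDerivAt
      (fun x => k1 / (cos ((n-1)*x))^2 + k2 * sin ((n-1)*x) / (cos ((n-1)*x))^2)
      ((n-1) * (2*k1*sin ((n-1)*φ) + k2*(1 + (sin ((n-1)*φ))^2)) / (cos ((n-1)*φ))^3) φ := by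
    have hcos2 : HasDerivAt (fun x => (cos ((n-1)*x))^2)
        (2 * cos ((n-1)*φ) * (-sin ((n-1)*φ) * (n-1))) φ := by
      exact (hcos.pow 2).congr_deriv (by push_cast; ring)
    have h1 := (hasDerivAt_const φ k1).div hcos2 (pow_ne_zero 2 hc)
    have h2 := (hsin.const_mul k2).div hcos2 (pow_ne_zero 2 hc)
    have h := h1.add h2
    refine h.congr_deriv ?_
    have hsc : sin ((n-1)*φ)^2 + cos ((n-1)*φ)^2 = 1 := sin_sq_add_cos_sq _
    set S := sin ((n-1)*φ) with hS
    set C := cos ((n-1)*φ) with hC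
    field_simp
    linear_combination ((n-1)*k2) * hsc
  -- partial derivatives of the Hamiltonian
  have hHr : HasDerivAt (fun x => Hnc2 n k0 k1 k2 x φ pr pφ)
      (n*(r^n)^2/r*pr^2 + (n-1)*(r^n)^2/r^3*pφ^2 + k0*(n-1)*(r^n)/r^2
        + 2*(n-1)*(r^n)^2/r^3
          * (k1/(cos ((n-1)*φ))^2 + k2*sin ((n-1)*φ)/(cos ((n-1)*φ))^2)) r := by
    unfold Hnc2 Tkin
    have h1 : HasDerivAt (fun x:ℝ => x ^ (2*n)) (2*n * r^(2*n-1)) r :=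
      Real.hasDerivAt_rpow_const (Or.inl hr')
    have h2 : HasDerivAt (fun x:ℝ => x ^ (n-1)) ((n-1) * r^(n-1-1)) r :=
      Real.hasDerivAt_rpow_const (Or.inl hr')
    have h3 : HasDerivAt (fun x:ℝ => x ^ (2*(n-1))) ((2*(n-1)) * r^(2*(n-1)-1)) r :=
      Real.hasDerivAt_rpow_const (Or.inl hr')
    have h4 := ((hasDerivAt_const r (pφ^2)).div (hasDerivAt_pow 2 r)
      (pow_ne_zero 2 hr')).const_add (pr^2)
    have h5 := (((h1.const_mul (1/2:ℝ)).mul h4).add (h2.const_mul k0)).add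
      (h3.mul_const (k1/(cos ((n-1)*φ))^2 + k2*sin ((n-1)*φ)/(cos ((n-1)*φ))^2))
    refine h5.congr_deriv ?_
    rw [e3, e5, e6, ← e1]
    simp only [Pi.div_apply]
    field_simp
    ring
  have hHpr : HasDerivAt (fun x => Hnc2 n k0 k1 k2 r φ x pφ) ((r^n)^2 * pr) pr := by
    unfold Hnc2 Tkin
    have h := ((((hasDerivAt_pow 2 pr).add_const (pφ^2/r^2)).const_mul
      ((1/2) * r ^ (2*n))).add_const (k0 * r^(n-1))).add_const
      (r ^ (2*(n-1)) * (k1/(cos ((n-1)*φ))^2 + k2*sin ((n-1)*φ)/(cos ((n-1)*φ))^2))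
    refine h.congr_deriv ?_
    rw [← e1]; ring
  have hHpφ : HasDerivAt (fun x => Hnc2 n k0 k1 k2 r φ pr x) ((r^n)^2/r/r * pφ) pφ := by
    unfold Hnc2 Tkin
    have h := (((((hasDerivAt_pow 2 pφ).div_const (r^2)).const_add (pr^2)).const_mul
      ((1/2) * r ^ (2*n))).add_const (k0 * r^(n-1))).add_const
      (r ^ (2*(n-1)) * (k1/(cos ((n-1)*φ))^2 + k2*sin ((n-1)*φ)/(cos ((n-1)*φ))^2))
    refine h.congr_deriv ?_
    rw [← e1]
    field_simp
    ring
  have hHφ : HasDerivAt (fun x => Hnc2 n k0 k1 k2 r x pr pφ)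
      ((r^n)^2/r/r * ((n-1) * (2*k1*sin ((n-1)*φ) + k2*(1 + (sin ((n-1)*φ))^2))
        / (cos ((n-1)*φ))^3)) φ := by
    unfold Hnc2 Tkin
    have h := (hU.const_mul (r ^ (2*(n-1)))).const_add
      ((1/2) * r ^ (2*n) * (pr^2 + pφ^2 / r^2) + k0 * r^(n-1))
    refine h.congr_deriv ?_
    rw [e4]
  refine ⟨?_, ?_⟩
  · -- first constant of motion
    have hF2 : HasDerivAt (fun x : ℝ => x^2
        + 2 * (k1 / (cos ((n-1)*φ))^2 + k2 * sin ((n-1)*φ) / (cos ((n-1)*φ))^2)) (2*pφ) pφ := by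
      simpa using (hasDerivAt_pow 2 pφ).add_const
        (2 * (k1 / (cos ((n-1)*φ))^2 + k2 * sin ((n-1)*φ) / (cos ((n-1)*φ))^2))
    have hF1 : HasDerivAt (fun x : ℝ => pφ^2
        + 2 * (k1 / (cos ((n-1)*x))^2 + k2 * sin ((n-1)*x) / (cos ((n-1)*x))^2))
        (2 * ((n-1) * (2*k1*sin ((n-1)*φ) + k2*(1 + (sin ((n-1)*φ))^2))
          / (cos ((n-1)*φ))^3)) φ := (hU.const_mul 2).const_add (pφ^2)
    simp only [pb, deriv_const]
    rw [hF1.deriv, hF2.deriv, hHpφ.deriv, hHφ.deriv]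
    ring
  · -- second constant of motion
    have hn : HasDerivAt (fun x:ℝ => x ^ n) (n * r^(n-1)) r :=
      Real.hasDerivAt_rpow_const (Or.inl hr')
    have hn1 : HasDerivAt (fun x:ℝ => x ^ (n-1)) ((n-1) * r^(n-1-1)) r :=
      Real.hasDerivAt_rpow_const (Or.inl hr')
    have hdiv : HasDerivAt (fun x : ℝ => pφ / x) ((0 * r - pφ * 1) / r^2) r := by
      exact (hasDerivAt_const r pφ).div (hasDerivAt_id r) hr'
    have hJr : HasDerivAt (fun x => P1 n x φ pr pφ * pφ + k0 * sin ((n-1)*φ)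
        + 2 * k1 * x ^ (n-1) * ((1 / cos ((n-1)*φ)) * (sin ((n-1)*φ) / cos ((n-1)*φ)))
        + k2 * x ^ (n-1) * ((1 / cos ((n-1)*φ))^2 + (sin ((n-1)*φ) / cos ((n-1)*φ))^2))
        (n*(r^n)/r*pr*pφ*cos ((n-1)*φ) + (n-1)*(r^n)/r^2*pφ^2*sin ((n-1)*φ)
          + (n-1)*(r^n)/r^2*((2*k1*sin ((n-1)*φ)
            + k2*(1 + (sin ((n-1)*φ))^2))/(cos ((n-1)*φ))^2)) r := by
      unfold P1
      have hP := ((hn.mul ((hdiv.mul_const (sin ((n-1)*φ))).const_add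
        (pr * cos ((n-1)*φ)))).mul_const pφ).add_const (k0 * sin ((n-1)*φ))
      have ht3 := (hn1.const_mul (2*k1)).mul_const
        ((1 / cos ((n-1)*φ)) * (sin ((n-1)*φ) / cos ((n-1)*φ)))
      have ht4 := (hn1.const_mul k2).mul_const
        ((1 / cos ((n-1)*φ))^2 + (sin ((n-1)*φ) / cos ((n-1)*φ))^2)
      have h := (hP.add ht3).add ht4
      refine h.congr_deriv ?_
      rw [e2, e5]
      field_simp
      ring
    have hJpr : HasDerivAt (fun x => P1 n r φ x pφ * pφ + k0 * sin ((n-1)*φ)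
        + 2 * k1 * r ^ (n-1) * ((1 / cos ((n-1)*φ)) * (sin ((n-1)*φ) / cos ((n-1)*φ)))
        + k2 * r ^ (n-1) * ((1 / cos ((n-1)*φ))^2 + (sin ((n-1)*φ) / cos ((n-1)*φ))^2))
        (r^n * pφ * cos ((n-1)*φ)) pr := by
      unfold P1
      have h := (((((((hasDerivAt_id pr).mul_const (cos ((n-1)*φ))).add_const
        ((pφ / r) * sin ((n-1)*φ))).const_mul (r^n)).mul_const pφ).add_const
        (k0 * sin ((n-1)*φ))).add_const
        (2 * k1 * r ^ (n-1) * ((1 / cos ((n-1)*φ)) * (sin ((n-1)*φ) / cos ((n-1)*φ))))).add_const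
        (k2 * r ^ (n-1) * ((1 / cos ((n-1)*φ))^2 + (sin ((n-1)*φ) / cos ((n-1)*φ))^2))
      refine h.congr_deriv ?_
      ring
    have hJpφ : HasDerivAt (fun x => P1 n r φ pr x * x + k0 * sin ((n-1)*φ)
        + 2 * k1 * r ^ (n-1) * ((1 / cos ((n-1)*φ)) * (sin ((n-1)*φ) / cos ((n-1)*φ)))
        + k2 * r ^ (n-1) * ((1 / cos ((n-1)*φ))^2 + (sin ((n-1)*φ) / cos ((n-1)*φ))^2))
        (r^n * pr * cos ((n-1)*φ) + 2*(r^n)/r*pφ*sin ((n-1)*φ)) pφ := by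
      unfold P1
      have hin := ((((hasDerivAt_id pφ).div_const r).mul_const (sin ((n-1)*φ))).const_add
        (pr * cos ((n-1)*φ))).const_mul (r^n)
      have h := (((hin.mul (hasDerivAt_id pφ)).add_const (k0 * sin ((n-1)*φ))).add_const
        (2 * k1 * r ^ (n-1) * ((1 / cos ((n-1)*φ)) * (sin ((n-1)*φ) / cos ((n-1)*φ))))).add_const
        (k2 * r ^ (n-1) * ((1 / cos ((n-1)*φ))^2 + (sin ((n-1)*φ) / cos ((n-1)*φ))^2))
      refine h.congr_deriv ?_
      simp only [id]
      field_simp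
      ring
    have hJφ : HasDerivAt (fun x => P1 n r x pr pφ * pφ + k0 * sin ((n-1)*x)
        + 2 * k1 * r ^ (n-1) * ((1 / cos ((n-1)*x)) * (sin ((n-1)*x) / cos ((n-1)*x)))
        + k2 * r ^ (n-1) * ((1 / cos ((n-1)*x))^2 + (sin ((n-1)*x) / cos ((n-1)*x))^2))
        ((n-1) * (-(r^n)*pr*pφ*sin ((n-1)*φ) + (r^n)/r*pφ^2*cos ((n-1)*φ)
            + k0*cos ((n-1)*φ))
          + (n-1)*(r^n)/r*((2*k1*((cos ((n-1)*φ))^2 + 2*(sin ((n-1)*φ))^2)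
            + 2*k2*sin ((n-1)*φ)*(1 + (sin ((n-1)*φ))^2 + (cos ((n-1)*φ))^2))
              /(cos ((n-1)*φ))^3)) φ := by
      unfold P1
      have hin := (hcos.const_mul pr).add (hsin.const_mul (pφ / r))
      have hP := (hin.const_mul (r^n)).mul_const pφ
      have hk0 := hsin.const_mul k0
      have h1c := (hasDerivAt_const φ (1:ℝ)).div hcos hc
      have htan := hsin.div hcos hc
      have ht3 := (h1c.mul htan).const_mul (2*k1*r^(n-1))
      have ht4 := ((h1c.pow 2).add (htan.pow 2)).const_mul (k2*r^(n-1))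
      have h := ((hP.add hk0).add ht3).add ht4
      refine h.congr_deriv ?_
      rw [e2]
      norm_num only [Pi.div_apply, Pi.pow_apply]
      field_simp
      ring
    simp only [pb]
    rw [hJr.deriv, hJpr.deriv, hJpφ.deriv, hJφ.deriv, hHr.deriv, hHpr.deriv,
      hHpφ.deriv, hHφ.deriv]
    field_simp
    ring
end

section
/- Let n ∈ ℝ, k_n = n − 1, and k₀, k₁, k₂ ∈ ℝ. Consider the Hamiltonian H_na' = T_n + k₀/r^{2k_n} + (1/r^{k_n})(k₁ cos(k_n φ) + k₂ sin(k_n φ)) on Ω = {r > 0}, and define the complex-valued function M_n = M_{n1} + i M_{n2} with M_{n1} = r^{2k_n}(r² p_r² − p_φ²) + 2k₀/r^{2k_n} + (2/r^{k_n})(k₁ cos(k_n φ) + k₂ sin(k_n φ)) and M_{n2} = 2 r^{2n−1} p_r p_φ + (2/r^{k_n})(k₁ sin(k_n φ) − k₂ cos(k_n φ)). Then {M_n, H_na'} = 2i λ_n M_n at every point of Ω, where λ_n = (n − 1) r^{2k_n} p_φ. -/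
open Real

/-- Canonical Poisson bracket, extended to complex-valued functions on the phase
space Ω ⊆ ℝ⁴ with coordinates (r, φ, p_r, p_φ). -/
noncomputable def pbC (F G : ℝ → ℝ → ℝ → ℝ → ℂ) (r φ pr pφ : ℝ) : ℂ :=
  (deriv (fun x => F x φ pr pφ) r) * (deriv (fun x => G r φ x pφ) pr)
    - (deriv (fun x => F r φ x pφ) pr) * (deriv (fun x => G x φ pr pφ) r)
    + (deriv (fun x => F r x pr pφ) φ) * (deriv (fun x => G r φ pr x) pφ)
    - (deriv (fun x => F r φ pr x) pφ) * (deriv (fun x => G r x pr pφ) φ)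

/-- The Hamiltonian H_na' = T_n + k₀/r^(2k_n) + (1/r^(k_n))(k₁ cos(k_n φ) + k₂ sin(k_n φ)),
regarded as a complex-valued function. -/
noncomputable def HnapC (n k0 k1 k2 : ℝ) (r φ pr pφ : ℝ) : ℂ :=
  ((Tkin n r φ pr pφ + k0 / r ^ (2*(n-1))
    + (1 / r ^ (n-1)) * (k1 * cos ((n-1)*φ) + k2 * sin ((n-1)*φ)) : ℝ) : ℂ)

/-- The complex function M_n = M_{n1} + i M_{n2}. -/
noncomputable def Mn (n k0 k1 k2 : ℝ) (r φ pr pφ : ℝ) : ℂ :=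
  ((r ^ (2*(n-1)) * (r^2 * pr^2 - pφ^2) + 2*k0 / r ^ (2*(n-1))
      + (2 / r ^ (n-1)) * (k1 * cos ((n-1)*φ) + k2 * sin ((n-1)*φ)) : ℝ) : ℂ)
    + Complex.I *
    ((2 * r ^ (2*n-1) * pr * pφ
      + (2 / r ^ (n-1)) * (k1 * sin ((n-1)*φ) - k2 * cos ((n-1)*φ)) : ℝ) : ℂ)

/-- The complex function N_φ = cos(2k_n φ) + i sin(2k_n φ). -/
noncomputable def Nphi2 (n : ℝ) (r φ pr pφ : ℝ) : ℂ :=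
  ((cos (2*(n-1)*φ) : ℝ) : ℂ) + Complex.I * ((sin (2*(n-1)*φ) : ℝ) : ℂ)

set_option maxHeartbeats 4000000 in
/-- {M_n, H_na'} = 2i λ_n M_n with λ_n = (n−1) r^(2k_n) p_φ, on Ω = {r > 0}. -/
theorem Mn_bracket_Hnap (n k0 k1 k2 : ℝ) :
    ∀ r φ pr pφ : ℝ, 0 < r →
      pbC (Mn n k0 k1 k2) (HnapC n k0 k1 k2) r φ pr pφ
        = 2 * Complex.I * (((n-1) * r ^ (2*(n-1)) * pφ : ℝ) : ℂ)
            * Mn n k0 k1 k2 r φ pr pφ := by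
  intro r φ pr pφ hr
  have hr0 : r ≠ 0 := ne_of_gt hr
  have hA0 : r ^ (n-1) ≠ 0 := (Real.rpow_pos_of_pos hr _).ne'
  have hA20 : r ^ (2*(n-1)) ≠ 0 := (Real.rpow_pos_of_pos hr _).ne'
  have hr20 : r ^ 2 ≠ 0 := pow_ne_zero 2 hr0
  have rp : ∀ e : ℝ, HasDerivAt (fun x : ℝ => x ^ e) (e * r ^ (e - 1)) r :=
    fun e => Real.hasDerivAt_rpow_const (Or.inl hr0)
  have hcos : HasDerivAt (fun x : ℝ => Real.cos ((n-1)*x))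
      (-Real.sin ((n-1)*φ) * ((n-1)*1)) φ :=
    (HasDerivAt.const_mul (n-1) (hasDerivAt_id' φ)).cos
  have hsin : HasDerivAt (fun x : ℝ => Real.sin ((n-1)*x))
      (Real.cos ((n-1)*φ) * ((n-1)*1)) φ :=
    (HasDerivAt.const_mul (n-1) (hasDerivAt_id' φ)).sin
  -- r-derivatives
  have hM1r := (((rp (2*(n-1))).mul
      (((hasDerivAt_pow 2 r).mul_const (pr^2)).sub_const (pφ^2))).add
      ((hasDerivAt_const r (2*k0)).div (rp (2*(n-1))) hA20)).add
      (((hasDerivAt_const r 2).div (rp (n-1)) hA0).mul_const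
        (k1 * Real.cos ((n-1)*φ) + k2 * Real.sin ((n-1)*φ)))
  have hM2r := ((((rp (2*n-1)).const_mul 2).mul_const pr).mul_const pφ).add
      (((hasDerivAt_const r 2).div (rp (n-1)) hA0).mul_const
        (k1 * Real.sin ((n-1)*φ) - k2 * Real.cos ((n-1)*φ)))
  have hMr := hM1r.ofReal_comp.add (hM2r.ofReal_comp.const_mul Complex.I)
  have hHr := ((((rp (2*n)).const_mul (1/2)).mul
      (((hasDerivAt_const r (pφ^2)).div (hasDerivAt_pow 2 r) hr20).const_add (pr^2))).add
      ((hasDerivAt_const r k0).div (rp (2*(n-1))) hA20)).add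
      (((hasDerivAt_const r 1).div (rp (n-1)) hA0).mul_const
        (k1 * Real.cos ((n-1)*φ) + k2 * Real.sin ((n-1)*φ)))
  have hHrC := hHr.ofReal_comp
  -- pr-derivatives
  have hM1pr := ((((hasDerivAt_pow 2 pr).const_mul (r^2)).sub_const (pφ^2)).const_mul
      (r ^ (2*(n-1)))).add_const (2*k0 / r ^ (2*(n-1))) |>.add_const
      ((2 / r ^ (n-1)) * (k1 * Real.cos ((n-1)*φ) + k2 * Real.sin ((n-1)*φ)))
  have hM2pr := ((HasDerivAt.const_mul (2 * r ^ (2*n-1)) (hasDerivAt_id' pr)).mul_const pφ).add_const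
      ((2 / r ^ (n-1)) * (k1 * Real.sin ((n-1)*φ) - k2 * Real.cos ((n-1)*φ)))
  have hMpr := hM1pr.ofReal_comp.add (hM2pr.ofReal_comp.const_mul Complex.I)
  have hHpr := (((hasDerivAt_pow 2 pr).add_const (pφ^2 / r^2)).const_mul
      (1/2 * r ^ (2*n))).add_const (k0 / r ^ (2*(n-1))) |>.add_const
      ((1 / r ^ (n-1)) * (k1 * Real.cos ((n-1)*φ) + k2 * Real.sin ((n-1)*φ)))
  have hHprC := hHpr.ofReal_comp
  -- pφ-derivatives
  have hM1pp := (((hasDerivAt_pow 2 pφ).const_sub (r^2 * pr^2)).const_mul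
      (r ^ (2*(n-1)))).add_const (2*k0 / r ^ (2*(n-1))) |>.add_const
      ((2 / r ^ (n-1)) * (k1 * Real.cos ((n-1)*φ) + k2 * Real.sin ((n-1)*φ)))
  have hM2pp := (HasDerivAt.const_mul (2 * r ^ (2*n-1) * pr) (hasDerivAt_id' pφ)).add_const
      ((2 / r ^ (n-1)) * (k1 * Real.sin ((n-1)*φ) - k2 * Real.cos ((n-1)*φ)))
  have hMpp := hM1pp.ofReal_comp.add (hM2pp.ofReal_comp.const_mul Complex.I)
  have hHpp := ((((hasDerivAt_pow 2 pφ).div_const (r^2)).const_add (pr^2)).const_mul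
      (1/2 * r ^ (2*n))).add_const (k0 / r ^ (2*(n-1))) |>.add_const
      ((1 / r ^ (n-1)) * (k1 * Real.cos ((n-1)*φ) + k2 * Real.sin ((n-1)*φ)))
  have hHppC := hHpp.ofReal_comp
  -- φ-derivatives
  have hM1f := (((hcos.const_mul k1).add (hsin.const_mul k2)).const_mul
      (2 / r ^ (n-1))).const_add
      (r ^ (2*(n-1)) * (r^2 * pr^2 - pφ^2) + 2*k0 / r ^ (2*(n-1)))
  have hM2f := (((hsin.const_mul k1).sub (hcos.const_mul k2)).const_mul
      (2 / r ^ (n-1))).const_add (2 * r ^ (2*n-1) * pr * pφ)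
  have hMf := hM1f.ofReal_comp.add (hM2f.ofReal_comp.const_mul Complex.I)
  have hHf := ((((hcos.const_mul k1).add (hsin.const_mul k2)).const_mul
      (1 / r ^ (n-1))).const_add
      (1/2 * r ^ (2*n) * (pr^2 + pφ^2 / r^2) + k0 / r ^ (2*(n-1)))).ofReal_comp
  have hE1 : r ^ (2*(n-1)) = r ^ (n-1) * r ^ (n-1) := by
    rw [show (2*(n-1) : ℝ) = (n-1) + (n-1) by ring, Real.rpow_add hr]
  have hE2 : r ^ (2*n) = r ^ (n-1) * r ^ (n-1) * (r * r) := by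
    rw [show (2*n : ℝ) = ((n-1) + (n-1)) + (1+1) by ring, Real.rpow_add hr,
      Real.rpow_add hr, Real.rpow_add hr, Real.rpow_one]
  have hE3 : r ^ (2*n-1) = r ^ (n-1) * r ^ (n-1) * r := by
    rw [show (2*n-1 : ℝ) = ((n-1) + (n-1)) + 1 by ring, Real.rpow_add hr,
      Real.rpow_add hr, Real.rpow_one]
  have hE4 : r ^ (2*(n-1)-1) = r ^ (n-1) * r ^ (n-1) / r := by
    rw [Real.rpow_sub hr, Real.rpow_one, hE1]
  have hE5 : r ^ (n-1-1) = r ^ (n-1) / r := by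
    rw [Real.rpow_sub hr, Real.rpow_one]
  have hE6 : r ^ (2*n-1-1) = r ^ (n-1) * r ^ (n-1) := by
    rw [show (2*n-1-1 : ℝ) = (n-1) + (n-1) by ring, Real.rpow_add hr]
  simp only [pbC, Mn, HnapC, Tkin]
  simp only [Pi.add_def, Pi.sub_def, Pi.mul_def, Pi.div_def] at hMr hHrC hMf hHf hMpr hHprC hMpp hHppC
  rw [hMr.deriv, hHprC.deriv, hMpr.deriv, hHrC.deriv, hMf.deriv, hHppC.deriv,
    hMpp.deriv, hHf.deriv]
  rw [hE4, hE5, hE6, hE1, hE2, hE3]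
  refine Complex.ext ?_ ?_ <;>
    simp only [Complex.add_re, Complex.add_im, Complex.sub_re, Complex.sub_im,
      Complex.mul_re, Complex.mul_im, Complex.ofReal_re, Complex.ofReal_im,
      Complex.I_re, Complex.I_im, Complex.re_ofNat, Complex.im_ofNat] <;>
    field_simp <;>
    ring
end

section
/- Let n ∈ ℝ, k_n = n − 1, and k₀, k₁, k₂ ∈ ℝ. Consider the Hamiltonian H_na' = T_n + k₀/r^{2k_n} + (1/r^{k_n})(k₁ cos(k_n φ) + k₂ sin(k_n φ)) on Ω = {r > 0}, and let N_φ = cos(2k_n φ) + i sin(2k_n φ). Then {N_φ, H_na'} = 2i λ_n N_φ at every point of Ω, where λ_n = (n − 1) r^{2k_n} p_φ. -/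
open Real

/-- {N_φ, H_na'} = 2i λ_n N_φ with λ_n = (n−1) r^(2k_n) p_φ, on Ω = {r > 0}. -/
theorem Nphi_bracket_Hnap (n k0 k1 k2 : ℝ) :
    ∀ r φ pr pφ : ℝ, 0 < r →
      pbC (Nphi2 n) (HnapC n k0 k1 k2) r φ pr pφ
        = 2 * Complex.I * (((n-1) * r ^ (2*(n-1)) * pφ : ℝ) : ℂ)
            * Nphi2 n r φ pr pφ := by
  intro r φ pr pφ hr
  set k := n - 1 with hk
  have hlin : HasDerivAt (fun x : ℝ => 2*k*x) (2*k) φ := by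
    simpa using (hasDerivAt_id φ).const_mul (2*k)
  have hcos : HasDerivAt (fun x : ℝ => Real.cos (2*k*x))
      (-Real.sin (2*k*φ) * (2*k)) φ :=
    (Real.hasDerivAt_cos (2*k*φ)).comp φ hlin
  have hsin : HasDerivAt (fun x : ℝ => Real.sin (2*k*x))
      (Real.cos (2*k*φ) * (2*k)) φ :=
    (Real.hasDerivAt_sin (2*k*φ)).comp φ hlin
  have hN : HasDerivAt (fun x : ℝ => Nphi2 n r x pr pφ)
      (((-Real.sin (2*k*φ) * (2*k) : ℝ) : ℂ)
        + Complex.I * ((Real.cos (2*k*φ) * (2*k) : ℝ) : ℂ)) φ := by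
    unfold Nphi2
    exact hcos.ofReal_comp.add (hsin.ofReal_comp.const_mul Complex.I)
  have hH : HasDerivAt (fun x : ℝ => HnapC n k0 k1 k2 r φ pr x)
      (((1/2) * r ^ (2*n) * (2*pφ / r^2) : ℝ) : ℂ) pφ := by
    have h1 : HasDerivAt (fun x : ℝ => pr^2 + x^2 / r^2) (2*pφ / r^2) pφ := by
      simpa using ((hasDerivAt_pow 2 pφ).div_const (r^2)).const_add (pr^2)
    have h2 : HasDerivAt (fun x : ℝ => (1/2) * r ^ (2*n) * (pr^2 + x^2 / r^2))
        ((1/2) * r ^ (2*n) * (2*pφ / r^2)) pφ := h1.const_mul _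
    have h3 := h2.add_const (k0 / r ^ (2*(n-1))
      + (1 / r ^ (n-1)) * (k1 * Real.cos ((n-1)*φ) + k2 * Real.sin ((n-1)*φ)))
    have h4 : HasDerivAt (fun x : ℝ => (1/2) * r ^ (2*n) * (pr^2 + x^2 / r^2)
        + k0 / r ^ (2*(n-1))
        + (1 / r ^ (n-1)) * (k1 * Real.cos ((n-1)*φ) + k2 * Real.sin ((n-1)*φ)))
        ((1/2) * r ^ (2*n) * (2*pφ / r^2)) pφ := by
      simpa [add_assoc] using h3
    unfold HnapC Tkin
    exact h4.ofReal_comp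
  have e1 : deriv (fun x => Nphi2 n x φ pr pφ) r = 0 := by
    simp [Nphi2]
  have e2 : deriv (fun x => Nphi2 n r φ x pφ) pr = 0 := by
    simp [Nphi2]
  have e4 : deriv (fun x => Nphi2 n r φ pr x) pφ = 0 := by
    simp [Nphi2]
  rw [pbC, e1, e2, e4, hN.deriv, hH.deriv]
  have hpow : r ^ (2*(n-1)) = r ^ (2*n) / r ^ 2 := by
    rw [show 2*(n-1) = 2*n - 2 by ring, Real.rpow_sub hr]
    norm_num [Real.rpow_two]
  rw [Nphi2, hk, hpow]
  have hr2 : (r:ℝ)^2 ≠ 0 := pow_ne_zero _ hr.ne'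
  push_cast
  field_simp
  ring_nf
  simp only [Complex.I_sq]
  ring
end

section
/- (Complex first integral of the oscillator-related pdm Hamiltonian.) Let n ∈ ℝ, k_n = n − 1, and k₀, k₁, k₂ ∈ ℝ. Consider H_na' = T_n + k₀/r^{2k_n} + (1/r^{k_n})(k₁ cos(k_n φ) + k₂ sin(k_n φ)) on Ω = {r > 0}. With M_n = M_{n1} + i M_{n2}, where M_{n1} = r^{2k_n}(r² p_r² − p_φ²) + 2k₀/r^{2k_n} + (2/r^{k_n})(k₁ cos(k_n φ) + k₂ sin(k_n φ)) and M_{n2} = 2 r^{2n−1} p_r p_φ + (2/r^{k_n})(k₁ sin(k_n φ) − k₂ cos(k_n φ)), and N_φ = cos(2k_n φ) + i sin(2k_n φ), the complex function J₂₃ = M_n · (conj N_φ) is a constant of motion: {J₂₃, H_na'} = 0 at every point of Ω; equivalently its real and imaginary parts J₂ = Re(J₂₃) and J₃ = Im(J₂₃) satisfy {J₂, H_na'} = 0 and {J₃, H_na'} = 0. -/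
open Real

/-- The complex function J₂₃ = M_n · conj(N_φ). -/
noncomputable def J23 (n k0 k1 k2 : ℝ) (r φ pr pφ : ℝ) : ℂ :=
  Mn n k0 k1 k2 r φ pr pφ * (starRingEnd ℂ) (Nphi2 n r φ pr pφ)

/-! ### Auxiliary definitions and lemmas -/

private lemma HasDerivAt.congr_d {f : ℝ → ℝ} {d d' x : ℝ} (h : HasDerivAt f d x)
    (e : d = d') : HasDerivAt f d' x := e ▸ h

/-- Real part building block M₁. -/
noncomputable def M1f (n k0 k1 k2 r φ pr pφ : ℝ) : ℝ :=
  r ^ (2*(n-1)) * (r^2 * pr^2 - pφ^2) + 2*k0 / r ^ (2*(n-1))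
    + (2 / r ^ (n-1)) * (k1 * Real.cos ((n-1)*φ) + k2 * Real.sin ((n-1)*φ))

/-- Imaginary part building block M₂. -/
noncomputable def M2f (n k0 k1 k2 r φ pr pφ : ℝ) : ℝ :=
  2 * r ^ (2*n-1) * pr * pφ
    + (2 / r ^ (n-1)) * (k1 * Real.sin ((n-1)*φ) - k2 * Real.cos ((n-1)*φ))

/-- Real part of J₂₃. -/
noncomputable def ReJ (n k0 k1 k2 r φ pr pφ : ℝ) : ℝ :=
  M1f n k0 k1 k2 r φ pr pφ * Real.cos (2*(n-1)*φ)
    + M2f n k0 k1 k2 r φ pr pφ * Real.sin (2*(n-1)*φ)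

/-- Imaginary part of J₂₃. -/
noncomputable def ImJ (n k0 k1 k2 r φ pr pφ : ℝ) : ℝ :=
  M2f n k0 k1 k2 r φ pr pφ * Real.cos (2*(n-1)*φ)
    - M1f n k0 k1 k2 r φ pr pφ * Real.sin (2*(n-1)*φ)

lemma J23_eq (n k0 k1 k2 r φ pr pφ : ℝ) :
    J23 n k0 k1 k2 r φ pr pφ
      = ((ReJ n k0 k1 k2 r φ pr pφ : ℝ) : ℂ)
        + Complex.I * ((ImJ n k0 k1 k2 r φ pr pφ : ℝ) : ℂ) := by
  simp only [J23, Mn, Nphi2, ReJ, ImJ, M1f, M2f, map_add, map_mul,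
    Complex.conj_ofReal, Complex.conj_I]
  apply Complex.ext <;>
    simp [Complex.mul_re, Complex.mul_im, Complex.add_re, Complex.add_im,
      Complex.sub_re, Complex.sub_im] <;> ring

lemma pb_eval {F G : ℝ → ℝ → ℝ → ℝ → ℝ} {r φ pr pφ a1 a2 a3 a4 b1 b2 b3 b4 : ℝ}
    (hF1 : HasDerivAt (fun x => F x φ pr pφ) a1 r)
    (hF2 : HasDerivAt (fun x => F r x pr pφ) a2 φ)
    (hF3 : HasDerivAt (fun x => F r φ x pφ) a3 pr)
    (hF4 : HasDerivAt (fun x => F r φ pr x) a4 pφ)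
    (hG1 : HasDerivAt (fun x => G x φ pr pφ) b1 r)
    (hG2 : HasDerivAt (fun x => G r x pr pφ) b2 φ)
    (hG3 : HasDerivAt (fun x => G r φ x pφ) b3 pr)
    (hG4 : HasDerivAt (fun x => G r φ pr x) b4 pφ) :
    pb F G r φ pr pφ = a1*b3 - a3*b1 + a2*b4 - a4*b2 := by
  unfold pb
  rw [hF1.deriv, hF2.deriv, hF3.deriv, hF4.deriv, hG1.deriv, hG2.deriv, hG3.deriv, hG4.deriv]

lemma pbC_eval {F G : ℝ → ℝ → ℝ → ℝ → ℂ} {r φ pr pφ : ℝ} {a1 a2 a3 a4 b1 b2 b3 b4 : ℂ}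
    (hF1 : HasDerivAt (fun x => F x φ pr pφ) a1 r)
    (hF2 : HasDerivAt (fun x => F r x pr pφ) a2 φ)
    (hF3 : HasDerivAt (fun x => F r φ x pφ) a3 pr)
    (hF4 : HasDerivAt (fun x => F r φ pr x) a4 pφ)
    (hG1 : HasDerivAt (fun x => G x φ pr pφ) b1 r)
    (hG2 : HasDerivAt (fun x => G r x pr pφ) b2 φ)
    (hG3 : HasDerivAt (fun x => G r φ x pφ) b3 pr)
    (hG4 : HasDerivAt (fun x => G r φ pr x) b4 pφ) :
    pbC F G r φ pr pφ = a1*b3 - a3*b1 + a2*b4 - a4*b2 := by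
  unfold pbC
  rw [hF1.deriv, hF2.deriv, hF3.deriv, hF4.deriv, hG1.deriv, hG2.deriv, hG3.deriv, hG4.deriv]

set_option maxHeartbeats 4000000 in
/-- J₂₃ = M_n conj(N_φ) is a (complex) constant of motion of H_na' on Ω = {r > 0};
equivalently its real and imaginary parts are real constants of motion. -/
theorem J23_constant_of_motion (n k0 k1 k2 : ℝ) :
    ∀ r φ pr pφ : ℝ, 0 < r →
      pbC (J23 n k0 k1 k2) (HnapC n k0 k1 k2) r φ pr pφ = 0 ∧
      pb (fun r φ pr pφ => (J23 n k0 k1 k2 r φ pr pφ).re)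
         (Hnap n k0 k1 k2) r φ pr pφ = 0 ∧
      pb (fun r φ pr pφ => (J23 n k0 k1 k2 r φ pr pφ).im)
         (Hnap n k0 k1 k2) r φ pr pφ = 0 := by
  intro r φ pr pφ hr
  have hA : (0:ℝ) < r ^ (n-1) := Real.rpow_pos_of_pos hr _
  have hA2 : (0:ℝ) < r ^ (2*(n-1)) := Real.rpow_pos_of_pos hr _
  have hp : ∀ p : ℝ, HasDerivAt (fun x : ℝ => x ^ p) (p * r ^ (p-1)) r :=
    fun p => Real.hasDerivAt_rpow_const (Or.inl hr.ne')
  -- power rewrites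
  have pw1 : r ^ (2*(n-1)) = (r ^ (n-1))^2 := by
    rw [two_mul, Real.rpow_add hr, sq]
  have pw2 : r ^ (2*(n-1) - 1) = (r ^ (n-1))^2 / r := by
    rw [Real.rpow_sub hr, pw1, Real.rpow_one]
  have pw3 : r ^ (n - 1 - 1) = r ^ (n-1) / r := by
    rw [Real.rpow_sub hr, Real.rpow_one]
  have pw4 : r ^ (2*n) = (r ^ (n-1))^2 * r^2 := by
    rw [show 2*n = 2*(n-1) + ((2:ℕ):ℝ) by push_cast; ring, Real.rpow_add hr, pw1,
      Real.rpow_natCast]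
  have pw5 : r ^ (2*n - 1) = (r ^ (n-1))^2 * r := by
    rw [show 2*n - 1 = 2*(n-1) + 1 by ring, Real.rpow_add hr, pw1, Real.rpow_one]
  have pw6 : r ^ (2*n - 1 - 1) = (r ^ (n-1))^2 := by
    rw [show 2*n - 1 - 1 = 2*(n-1) by ring, pw1]
  set c := Real.cos ((n-1)*φ) with hc
  set s := Real.sin ((n-1)*φ) with hs
  -- one-variable slices: r derivatives
  have hM1r := ((hp (2*(n-1))).mul
      (((hasDerivAt_pow 2 r).mul_const (pr^2)).sub_const (pφ^2))).add
      ((hasDerivAt_const r (2*k0)).div (hp (2*(n-1))) hA2.ne') |>.add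
      (((hasDerivAt_const r 2).div (hp (n-1)) hA.ne').mul_const (k1 * c + k2 * s))
  have hM2r := (((hp (2*n-1)).const_mul 2).mul_const pr).mul_const pφ |>.add
      (((hasDerivAt_const r 2).div (hp (n-1)) hA.ne').mul_const (k1 * s - k2 * c))
  have hRr : HasDerivAt (fun x => ReJ n k0 k1 k2 x φ pr pφ) _ r :=
    (hM1r.mul_const (Real.cos (2*(n-1)*φ))).add (hM2r.mul_const (Real.sin (2*(n-1)*φ)))
  have hIr : HasDerivAt (fun x => ImJ n k0 k1 k2 x φ pr pφ) _ r :=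
    (hM2r.mul_const (Real.cos (2*(n-1)*φ))).sub (hM1r.mul_const (Real.sin (2*(n-1)*φ)))
  have hHr : HasDerivAt (fun x => Hnap n k0 k1 k2 x φ pr pφ) _ r :=
    ((((hp (2*n)).const_mul (1/2)).mul
        ((hasDerivAt_const r (pr^2)).add
          ((hasDerivAt_const r (pφ^2)).div (hasDerivAt_pow 2 r) (by positivity)))).add
      ((hasDerivAt_const r k0).div (hp (2*(n-1))) hA2.ne')).add
      (((hasDerivAt_const r 1).div (hp (n-1)) hA.ne').mul_const (k1 * c + k2 * s))
  -- φ derivatives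
  have hlin : HasDerivAt (fun x : ℝ => (n-1)*x) ((n-1)*1) φ := (hasDerivAt_id φ).const_mul (n-1)
  have hlin2 : HasDerivAt (fun x : ℝ => 2*(n-1)*x) (2*(n-1)*1) φ :=
    (hasDerivAt_id φ).const_mul (2*(n-1))
  have hcos := hlin.cos
  have hsin := hlin.sin
  have hcos2 := hlin2.cos
  have hsin2 := hlin2.sin
  have hM1φ := (((hcos.const_mul k1).add (hsin.const_mul k2)).const_mul
      (2 / r ^ (n-1))).const_add
      (r ^ (2*(n-1)) * (r^2 * pr^2 - pφ^2) + 2*k0 / r ^ (2*(n-1)))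
  have hM2φ := (((hsin.const_mul k1).sub (hcos.const_mul k2)).const_mul
      (2 / r ^ (n-1))).const_add (2 * r ^ (2*n-1) * pr * pφ)
  have hRφ : HasDerivAt (fun x => ReJ n k0 k1 k2 r x pr pφ) _ φ :=
    (hM1φ.mul hcos2).add (hM2φ.mul hsin2)
  have hIφ : HasDerivAt (fun x => ImJ n k0 k1 k2 r x pr pφ) _ φ :=
    (hM2φ.mul hcos2).sub (hM1φ.mul hsin2)
  have hHφ : HasDerivAt (fun x => Hnap n k0 k1 k2 r x pr pφ) _ φ :=
    ((((hcos.const_mul k1).add (hsin.const_mul k2)).const_mul (1 / r ^ (n-1))).const_add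
      (1/2 * r ^ (2*n) * (pr^2 + pφ^2 / r^2) + k0 / r ^ (2*(n-1))))
  -- pr derivatives
  have hM1pr := ((((hasDerivAt_pow 2 pr).const_mul (r^2)).sub_const (pφ^2)).const_mul
      (r ^ (2*(n-1)))).add_const (2*k0 / r ^ (2*(n-1))) |>.add_const
      ((2 / r ^ (n-1)) * (k1 * c + k2 * s))
  have hM2pr := (((hasDerivAt_id pr).const_mul (2 * r ^ (2*n-1))).mul_const pφ).add_const
      ((2 / r ^ (n-1)) * (k1 * s - k2 * c))
  have hRpr : HasDerivAt (fun x => ReJ n k0 k1 k2 r φ x pφ) _ pr :=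
    (hM1pr.mul_const (Real.cos (2*(n-1)*φ))).add (hM2pr.mul_const (Real.sin (2*(n-1)*φ)))
  have hIpr : HasDerivAt (fun x => ImJ n k0 k1 k2 r φ x pφ) _ pr :=
    (hM2pr.mul_const (Real.cos (2*(n-1)*φ))).sub (hM1pr.mul_const (Real.sin (2*(n-1)*φ)))
  have hHpr : HasDerivAt (fun x => Hnap n k0 k1 k2 r φ x pφ) _ pr :=
    ((((hasDerivAt_pow 2 pr).add_const (pφ^2 / r^2)).const_mul
      (1/2 * r ^ (2*n))).add_const (k0 / r ^ (2*(n-1)))).add_const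
      ((1 / r ^ (n-1)) * (k1 * c + k2 * s))
  -- pφ derivatives
  have hM1pφ := (((hasDerivAt_pow 2 pφ).const_sub (r^2 * pr^2)).const_mul
      (r ^ (2*(n-1)))).add_const (2*k0 / r ^ (2*(n-1))) |>.add_const
      ((2 / r ^ (n-1)) * (k1 * c + k2 * s))
  have hM2pφ := ((hasDerivAt_id pφ).const_mul (2 * r ^ (2*n-1) * pr)).add_const
      ((2 / r ^ (n-1)) * (k1 * s - k2 * c))
  have hRpφ : HasDerivAt (fun x => ReJ n k0 k1 k2 r φ pr x) _ pφ :=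
    (hM1pφ.mul_const (Real.cos (2*(n-1)*φ))).add (hM2pφ.mul_const (Real.sin (2*(n-1)*φ)))
  have hIpφ : HasDerivAt (fun x => ImJ n k0 k1 k2 r φ pr x) _ pφ :=
    (hM2pφ.mul_const (Real.cos (2*(n-1)*φ))).sub (hM1pφ.mul_const (Real.sin (2*(n-1)*φ)))
  have hHpφ : HasDerivAt (fun x => Hnap n k0 k1 k2 r φ pr x) _ pφ :=
    ((((hasDerivAt_pow 2 pφ).div_const (r^2)).const_add (pr^2)).const_mul
      (1/2 * r ^ (2*n))).add_const (k0 / r ^ (2*(n-1))) |>.add_const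
      ((1 / r ^ (n-1)) * (k1 * c + k2 * s))
  -- function identifications
  have hre : (fun a b cc d => (J23 n k0 k1 k2 a b cc d).re) = ReJ n k0 k1 k2 := by
    funext a b cc d; rw [J23_eq]; simp
  have him : (fun a b cc d => (J23 n k0 k1 k2 a b cc d).im) = ImJ n k0 k1 k2 := by
    funext a b cc d; rw [J23_eq]; simp
  have key1 : pb (ReJ n k0 k1 k2) (Hnap n k0 k1 k2) r φ pr pφ = 0 := by
    rw [pb_eval hRr hRφ hRpr hRpφ hHr hHφ hHpr hHpφ]
    rw [show 2*(n-1)*φ = (n-1)*φ + (n-1)*φ by ring, Real.cos_add, Real.sin_add]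
    simp only [pw1, pw2, pw3, pw4, pw5, pw6, ← hc, ← hs, Pi.add_apply, Pi.sub_apply, Pi.mul_apply,
      Pi.div_apply]
    field_simp
    ring
  have key2 : pb (ImJ n k0 k1 k2) (Hnap n k0 k1 k2) r φ pr pφ = 0 := by
    rw [pb_eval hIr hIφ hIpr hIpφ hHr hHφ hHpr hHpφ]
    rw [show 2*(n-1)*φ = (n-1)*φ + (n-1)*φ by ring, Real.cos_add, Real.sin_add]
    simp only [pw1, pw2, pw3, pw4, pw5, pw6, ← hc, ← hs, Pi.add_apply, Pi.sub_apply, Pi.mul_apply,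
      Pi.div_apply]
    field_simp
    ring
  refine ⟨?_, ?_, ?_⟩
  · -- complex bracket
    have fJ1 : (fun x => J23 n k0 k1 k2 x φ pr pφ)
        = fun x => ((ReJ n k0 k1 k2 x φ pr pφ : ℝ) : ℂ)
            + Complex.I * ((ImJ n k0 k1 k2 x φ pr pφ : ℝ) : ℂ) :=
      funext fun x => J23_eq n k0 k1 k2 x φ pr pφ
    have fJ2 : (fun x => J23 n k0 k1 k2 r x pr pφ)
        = fun x => ((ReJ n k0 k1 k2 r x pr pφ : ℝ) : ℂ)
            + Complex.I * ((ImJ n k0 k1 k2 r x pr pφ : ℝ) : ℂ) :=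
      funext fun x => J23_eq n k0 k1 k2 r x pr pφ
    have fJ3 : (fun x => J23 n k0 k1 k2 r φ x pφ)
        = fun x => ((ReJ n k0 k1 k2 r φ x pφ : ℝ) : ℂ)
            + Complex.I * ((ImJ n k0 k1 k2 r φ x pφ : ℝ) : ℂ) :=
      funext fun x => J23_eq n k0 k1 k2 r φ x pφ
    have fJ4 : (fun x => J23 n k0 k1 k2 r φ pr x)
        = fun x => ((ReJ n k0 k1 k2 r φ pr x : ℝ) : ℂ)
            + Complex.I * ((ImJ n k0 k1 k2 r φ pr x : ℝ) : ℂ) :=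
      funext fun x => J23_eq n k0 k1 k2 r φ pr x
    have fH1 : (fun x => HnapC n k0 k1 k2 x φ pr pφ)
        = (fun x => ((Hnap n k0 k1 k2 x φ pr pφ : ℝ) : ℂ)) := rfl
    have fH2 : (fun x => HnapC n k0 k1 k2 r x pr pφ)
        = (fun x => ((Hnap n k0 k1 k2 r x pr pφ : ℝ) : ℂ)) := rfl
    have fH3 : (fun x => HnapC n k0 k1 k2 r φ x pφ)
        = (fun x => ((Hnap n k0 k1 k2 r φ x pφ : ℝ) : ℂ)) := rfl
    have fH4 : (fun x => HnapC n k0 k1 k2 r φ pr x)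
        = (fun x => ((Hnap n k0 k1 k2 r φ pr x : ℝ) : ℂ)) := rfl
    unfold pbC
    rw [fJ1, fJ2, fJ3, fJ4, fH1, fH2, fH3, fH4]
    have hadd : ∀ {f g : ℝ → ℂ} {f' g' : ℂ} {x : ℝ}, HasDerivAt f f' x → HasDerivAt g g' x →
        HasDerivAt (fun y => f y + g y) (f' + g') x := fun hf hg => hf.add hg
    rw [(hadd (hRr.ofReal_comp) ((hIr.ofReal_comp).const_mul Complex.I)).deriv,
        (hadd (hRφ.ofReal_comp) ((hIφ.ofReal_comp).const_mul Complex.I)).deriv,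
        (hadd (hRpr.ofReal_comp) ((hIpr.ofReal_comp).const_mul Complex.I)).deriv,
        (hadd (hRpφ.ofReal_comp) ((hIpφ.ofReal_comp).const_mul Complex.I)).deriv,
        hHr.ofReal_comp.deriv, hHφ.ofReal_comp.deriv, hHpr.ofReal_comp.deriv,
        hHpφ.ofReal_comp.deriv]
    have e1 := key1; have e2 := key2
    rw [pb_eval hRr hRφ hRpr hRpφ hHr hHφ hHpr hHpφ] at e1
    rw [pb_eval hIr hIφ hIpr hIpφ hHr hHφ hHpr hHpφ] at e2
    have expand : ∀ aR aI bR bI cR cI dR dI hR hφ hpr hpφ : ℝ,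
        ((aR:ℂ) + Complex.I * aI) * (hpr:ℝ)
          - ((cR:ℂ) + Complex.I * cI) * (hR:ℝ)
          + ((bR:ℂ) + Complex.I * bI) * (hpφ:ℝ)
          - ((dR:ℂ) + Complex.I * dI) * (hφ:ℝ)
        = ((aR*hpr - cR*hR + bR*hpφ - dR*hφ : ℝ) : ℂ)
          + Complex.I * ((aI*hpr - cI*hR + bI*hpφ - dI*hφ : ℝ) : ℂ) := by
      intros; push_cast; ring
    rw [expand]
    rw [e1, e2]
    simp
  · rw [hre]; exact key1
  · rw [him]; exact key2
end
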